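/- arXiv:1701.08577 — 6 statements merged into one kernel-verified Lean document; each statement's English description precedes it below -/
import Mathlib

section
/- For every integer n ≥ 1 and every angle 0 < β < π there exists a natural number q = q(n,β) with the following property: every finite set A ⊆ ℝⁿ with at least q points contains three distinct points a, b, c such that the angle at b between the vectors a − b and c − b is at least β (and at most π). -/
open Metric InnerProductGeometry Real

/-- **Erdős–Füredi type lemma.** For every `n ≥ 1` and every angle `0 < β < π` there exists
`q = q(n, β) ∈ ℕ` such that every finite set `A ⊆ ℝⁿ` with at least `q` points contains three
distinct points `a, b, c` whose angle at `b` (the angle between `a - b` and `c - b`) lies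
between `β` and `π`. -/
theorem erdos_furedi_angle (n : ℕ) (hn : 1 ≤ n) (β : ℝ) (hβ0 : 0 < β) (hβπ : β < Real.pi) :
    ∃ q : ℕ, ∀ A : Finset (EuclideanSpace ℝ (Fin n)), q ≤ A.card →
      ∃ a ∈ A, ∃ b ∈ A, ∃ c ∈ A, a ≠ b ∧ b ≠ c ∧ a ≠ c ∧
        β ≤ EuclideanGeometry.angle a b c ∧ EuclideanGeometry.angle a b c ≤ Real.pi := by
  classical
  set E := EuclideanSpace ℝ (Fin n) with hE
  have hπ := Real.pi_pos
  set ε : ℝ := Real.pi - β with hεdef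
  have hε0 : 0 < ε := by simp [hεdef]; linarith
  have hεπ : ε < Real.pi := by simp [hεdef]; linarith
  set r : ℝ := Real.sin (ε / 2) with hrdef
  have hr0 : 0 < r := Real.sin_pos_of_pos_of_lt_pi (by linarith) (by linarith)
  have hr1 : r < 1 := by
    have := Real.strictMonoOn_sin (a := ε / 2) (b := Real.pi / 2)
      ⟨by linarith, by linarith⟩ ⟨by linarith, le_refl _⟩ (by linarith)
    simpa [Real.sin_pi_div_two] using this
  -- finite cover of the unit sphere by balls of radius r
  obtain ⟨t, ht⟩ := (isCompact_sphere (0 : E) 1).elim_finite_subcover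
    (fun w : E => Metric.ball w r) (fun w => isOpen_ball)
    (fun v hv => Set.mem_iUnion.2 ⟨v, mem_ball_self hr0⟩)
  refine ⟨2 ^ t.card + 1, ?_⟩
  intro A hA
  -- normalized direction
  set d : E → E → E := fun x y => ‖x - y‖⁻¹ • (x - y) with hddef
  have hdnorm : ∀ x y : E, x ≠ y → ‖d x y‖ = 1 := by
    intro x y hxy
    exact norm_smul_inv_norm (sub_ne_zero.2 hxy)
  set col : E → E → E := fun x y =>
    if h : ∃ w ∈ t, d x y ∈ Metric.ball w r then h.choose else 0 with hcoldef
  have hcol : ∀ x y : E, x ≠ y → col x y ∈ t ∧ d x y ∈ Metric.ball (col x y) r := by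
    intro x y hxy
    have hds : d x y ∈ Metric.sphere (0 : E) 1 := by
      simpa [mem_sphere_zero_iff_norm] using hdnorm x y hxy
    have h : ∃ w ∈ t, d x y ∈ Metric.ball w r := by
      have := ht hds
      simpa using this
    simp only [hcoldef, dif_pos h]
    exact ⟨h.choose_spec.1, h.choose_spec.2⟩
  set O : E → Finset E := fun y => t.filter (fun w => ∃ z ∈ A, z ≠ y ∧ col y z = w) with hOdef
  have hmaps : ∀ x ∈ A, O x ∈ t.powerset := fun x _ =>
    Finset.mem_powerset.2 (Finset.filter_subset _ _)
  have hcard : t.powerset.card < A.card := by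
    rw [Finset.card_powerset]; omega
  obtain ⟨x, hx, y, hy, hxy, hOxy⟩ :=
    Finset.exists_ne_map_eq_of_card_lt_of_maps_to hcard hmaps
  have hmem : col x y ∈ O x := by
    refine Finset.mem_filter.2 ⟨(hcol x y hxy).1, y, hy, hxy.symm, rfl⟩
  rw [hOxy] at hmem
  obtain ⟨-, z, hz, hzy, hcolyz⟩ := Finset.mem_filter.1 hmem
  -- the two directions are in the same small ball
  have hu : d x y ∈ Metric.ball (col x y) r := (hcol x y hxy).2
  have hv : d y z ∈ Metric.ball (col x y) r := by
    rw [← hcolyz]; exact (hcol y z (Ne.symm hzy)).2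
  have huv : dist (d x y) (d y z) < 2 * r :=
    calc dist (d x y) (d y z) ≤ dist (d x y) (col x y) + dist (col x y) (d y z) :=
          dist_triangle _ _ _
      _ < r + r := add_lt_add hu (by rw [dist_comm]; exact hv)
      _ = 2 * r := by ring
  -- x ≠ z
  have hxz : x ≠ z := by
    intro h
    subst h
    have hdyx : d y x = -(d x y) := by
      simp only [hddef]
      rw [norm_sub_rev, ← neg_sub x y, smul_neg]
    rw [hdyx, dist_eq_norm, sub_neg_eq_add] at huv
    have : ‖d x y + d x y‖ = 2 := by
      rw [← two_smul ℝ, norm_smul, hdnorm x y hxy]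
      norm_num
    rw [this] at huv
    linarith
  -- inner product bound
  have hnuv : ‖d x y - d y z‖ < 2 * r := by rwa [dist_eq_norm] at huv
  have hinner : (1 : ℝ) - 2 * r ^ 2 < inner ℝ (d x y) (d y z) := by
    have hsq : ‖d x y - d y z‖ ^ 2 < (2 * r) ^ 2 := by
      have h0 : (0 : ℝ) ≤ ‖d x y - d y z‖ := norm_nonneg _
      nlinarith
    have hexp : ‖d x y - d y z‖ ^ 2 = 2 - 2 * inner ℝ (d x y) (d y z) := by
      rw [norm_sub_sq_real, hdnorm x y hxy, hdnorm y z (Ne.symm hzy)]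
      ring
    nlinarith
  have hcosε : Real.cos ε = 1 - 2 * r ^ 2 := by
    have h2 : ε = 2 * (ε / 2) := by ring
    rw [h2, Real.cos_two_mul]
    have := Real.sin_sq_add_cos_sq (ε / 2)
    nlinarith [this]
  -- angle between the directions is < ε
  have hangle_uv : angle (d x y) (d y z) < ε := by
    have hcosangle : Real.cos (angle (d x y) (d y z)) = inner ℝ (d x y) (d y z) := by
      rw [cos_angle, hdnorm x y hxy, hdnorm y z (Ne.symm hzy)]
      simp
    have hlt : Real.cos ε < Real.cos (angle (d x y) (d y z)) := by
      rw [hcosangle, hcosε]; exact hinner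
    exact (Real.strictAntiOn_cos.lt_iff_gt ⟨le_of_lt hε0, le_of_lt hεπ⟩
      ⟨angle_nonneg _ _, angle_le_pi _ _⟩).1 hlt
  have hsmul : angle (d x y) (d y z) = angle (x - y) (y - z) := by
    rw [hddef]
    simp only
    rw [angle_smul_left_of_pos _ _ (inv_pos.2 (norm_pos_iff.2 (sub_ne_zero.2 hxy))),
      angle_smul_right_of_pos _ _ (inv_pos.2 (norm_pos_iff.2 (sub_ne_zero.2 (Ne.symm hzy))))]
  have hangle : angle (x - y) (y - z) < ε := hsmul ▸ hangle_uv
  refine ⟨x, hx, y, hy, z, hz, hxy, Ne.symm hzy, hxz, ?_, EuclideanGeometry.angle_le_pi _ _ _⟩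
  have : EuclideanGeometry.angle x y z = Real.pi - angle (x - y) (y - z) := by
    rw [EuclideanGeometry.angle, show (x -ᵥ y : E) = x - y from rfl,
      show (z -ᵥ y : E) = z - y from rfl, show (z - y : E) = -(y - z) by abel,
      angle_neg_right]
  rw [this]
  simp only [hεdef] at hangle
  linarith
end

section
/- Let y ∈ ℝⁿ, let θ be a unit vector, let 0 < η ≤ 1, let r > 0, and set t = √((η² + 4)/η²) and γ = 1/t. If z ∈ ℝⁿ lies outside both the closed ball B(y, tr) and the cone H(y, θ, γ), then the closed ball B(z, r) is disjoint from H(y, θ, η). -/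
open Metric
open scoped RealInnerProductSpace


set_option maxHeartbeats 1600000 in
lemma key_arith (η γ s g U A p P q Q : ℝ)
    (hη0 : 0 < η) (hη1 : η ≤ 1)
    (hs0 : 0 ≤ s) (hs : s^2 = 1 - η^2)
    (hγ0 : 0 < γ) (hg0 : 0 ≤ g) (hg : g^2 = 1 - γ^2) (hηg : η*g = 2*γ)
    (hU : 0 ≤ U) (hA : 0 ≤ A)
    (hp : η*U ≤ p) (hq : q ≤ γ*A)
    (hP0 : 0 ≤ P) (hQ0 : 0 ≤ Q)
    (hPU : p^2 + P^2 = U^2) (hQA : q^2 + Q^2 = A^2) :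
    γ^2*A^2 ≤ (p-q)^2 + (P-Q)^2 := by
  have hs1 : s ≤ 1 := by nlinarith [sq_nonneg s]
  have hγη : 2*γ ≤ η := by nlinarith [sq_nonneg g, mul_le_mul_of_nonneg_left hη1 hη0.le]
  have hγ1 : γ ≤ 1 := by linarith
  have hp0 : 0 ≤ p := le_trans (by positivity) hp
  have hp2 : η^2*U^2 ≤ p^2 := by nlinarith [mul_nonneg (sub_nonneg.2 hp) (by positivity : (0:ℝ) ≤ p + η*U)]
  have hPsU : P ≤ s*U := by
    have h1 : P^2 ≤ (s*U)^2 := by nlinarith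
    exact (pow_le_pow_iff_left₀ hP0 (by positivity) (by norm_num)).1 h1
  have hcone : η*P ≤ s*p := by nlinarith [mul_le_mul_of_nonneg_left hPsU hη0.le, mul_le_mul_of_nonneg_left hp hs0]
  rcases le_or_gt 0 (η*q + s*Q) with hcase | hcase
  · -- distance to halfplane {s x - η y ≥ 0} containing the cone
    have hline : γ*A ≤ η*Q - s*q := by
      rcases le_or_gt 0 q with hq0 | hq0
      · have hq2 : q^2 ≤ (γ*A)^2 := pow_le_pow_left₀ hq0 hq 2
        have hQg : g*A ≤ Q := by
          have h1 : (g*A)^2 ≤ Q^2 := by nlinarith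
          exact (pow_le_pow_iff_left₀ (by positivity) hQ0 (by norm_num)).1 h1
        have h2 : 2*γ*A ≤ η*Q := by
          have := mul_le_mul_of_nonneg_left hQg hη0.le
          nlinarith
        have h3 : s*q ≤ γ*A := by
          calc s*q ≤ 1*q := mul_le_mul_of_nonneg_right hs1 hq0
          _ = q := by ring_nf
          _ ≤ γ*A := hq
        linarith
      · have hkey : (η*A)^2 ≤ (η*Q - s*q)^2 := by
          nlinarith [mul_le_mul_of_nonneg_left hcase (mul_nonneg hη0.le (neg_nonneg.2 hq0.le))]
        have h0 : 0 ≤ η*Q - s*q := by nlinarith [mul_nonneg hη0.le hQ0, mul_nonneg hs0 (neg_nonneg.2 hq0.le)]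
        have h1 : η*A ≤ η*Q - s*q := (pow_le_pow_iff_left₀ (by positivity) h0 (by norm_num)).1 hkey
        nlinarith [mul_le_mul_of_nonneg_right hγη hA]
    have hCS : (s*(p-q) - η*(P-Q))^2 ≤ ((p-q)^2+(P-Q)^2) * (s^2+η^2) := by
      nlinarith [sq_nonneg (s*(P-Q)+η*(p-q))]
    have hdir : η*Q - s*q ≤ s*(p-q) - η*(P-Q) := by linarith
    have h2 : (γ*A)^2 ≤ (s*(p-q) - η*(P-Q))^2 :=
      pow_le_pow_left₀ (by positivity) (le_trans hline hdir) 2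
    have hsum : s^2 + η^2 = 1 := by linarith
    nlinarith [h2, hCS]
  · -- obtuse case: every cone point has nonpositive inner product with (q,Q)
    have hq0 : q ≤ 0 := by nlinarith [mul_nonneg hs0 hQ0]
    have hac : p*q + P*Q ≤ 0 := by
      rcases eq_or_lt_of_le hs0 with hs' | hs'
      · have hPz : P = 0 := by nlinarith
        rw [hPz]
        simpa using mul_nonpos_of_nonneg_of_nonpos hp0 hq0
      · have h1 : P*(η*q + s*Q) ≤ 0 := mul_nonpos_of_nonneg_of_nonpos hP0 hcase.le
        have h2 : (s*p - η*P)*q ≤ 0 := mul_nonpos_of_nonneg_of_nonpos (by linarith) hq0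
        have h3 : s*(p*q + P*Q) ≤ 0 := by nlinarith
        exact nonpos_of_mul_nonpos_right (by linarith [h3]) hs'
    nlinarith [sq_nonneg U, mul_le_mul_of_nonneg_right (mul_le_one₀ hγ1 hγ0.le hγ1) (sq_nonneg A)]


open Metric
open scoped RealInnerProductSpace


lemma aux_gamma2 (η t γ : ℝ) (hη0 : 0 < η) (ht0 : 0 < t)
    (ht2 : t^2 = (η^2 + 4)/η^2) (hγt : γ * t = 1) :
    γ^2 * (η^2 + 4) = η^2 := by
  have h4 : (0:ℝ) < η^2 := by positivity
  have h1 : γ^2 * t^2 = 1 := by nlinarith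
  rw [ht2] at h1
  field_simp at h1
  linarith

lemma aux_etag (η γ g : ℝ) (hη0 : 0 < η) (hγ0 : 0 < γ) (hg0 : 0 ≤ g)
    (hg : g^2 = 1 - γ^2) (hγ2 : γ^2 * (η^2 + 4) = η^2) : η * g = 2 * γ := by
  have h1 : (η*g)^2 = (2*γ)^2 := by nlinarith
  nlinarith [mul_nonneg hη0.le hg0]

lemma aux_expand (X D p P q Q : ℝ) (h : D = (p^2 + P^2) - 2*X + (q^2 + Q^2))
    (hX : X ≤ p*q + P*Q) : (p - q)^2 + (P - Q)^2 ≤ D := by nlinarith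

lemma aux_final (γ t r nA D : ℝ) (hγ0 : 0 < γ) (ht0 : 0 < t) (hr : 0 < r)
    (hγt : γ * t = 1) (hA : t * r < nA) (hkey : γ^2 * nA^2 ≤ D) : r^2 < D := by
  have h0 : (0:ℝ) ≤ t * r := by positivity
  have h1 : (t*r)^2 < nA^2 := by nlinarith
  have h2 : r^2 = γ^2 * (t*r)^2 := by
    have : r^2 = (γ*t)^2 * r^2 := by rw [hγt]; ring
    linarith [this, (by ring : (γ*t)^2 * r^2 = γ^2*(t*r)^2)]
  nlinarith [mul_pos (mul_pos hγ0 hγ0) (mul_pos hr hr)]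

/-- If `z` lies outside both the closed ball `B(y, t r)` and the cone
`H(y, θ, γ) = {w : (w - y)·θ > γ |w - y|}`, where `t = √((η² + 4)/η²)` and `γ = 1/t`,
then the closed ball `B(z, r)` is disjoint from the cone `H(y, θ, η)`. -/
theorem ball_disjoint_cone (n : ℕ) (y θ z : EuclideanSpace ℝ (Fin n)) (hθ : ‖θ‖ = 1)
    (η r : ℝ) (hη0 : 0 < η) (hη1 : η ≤ 1) (hr : 0 < r)
    (t γ : ℝ) (ht : t = Real.sqrt ((η ^ 2 + 4) / η ^ 2)) (hγ : γ = 1 / t)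
    (hz1 : z ∉ closedBall y (t * r))
    (hz2 : z ∉ {w : EuclideanSpace ℝ (Fin n) | γ * ‖w - y‖ < ⟪w - y, θ⟫}) :
    ∀ w ∈ closedBall z r,
      w ∉ {w : EuclideanSpace ℝ (Fin n) | η * ‖w - y‖ < ⟪w - y, θ⟫} := by
  intro w hw hmem
  have hx : (0:ℝ) < (η ^ 2 + 4) / η ^ 2 := by positivity
  have ht0 : 0 < t := ht ▸ Real.sqrt_pos.2 hx
  have ht2 : t^2 = (η ^ 2 + 4) / η ^ 2 := by rw [ht, Real.sq_sqrt hx.le]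
  have hγ0 : 0 < γ := hγ ▸ by positivity
  have hγt : γ * t = 1 := by rw [hγ]; field_simp
  have hγ2 : γ^2 * (η^2 + 4) = η^2 := aux_gamma2 η t γ hη0 ht0 ht2 hγt
  set s := Real.sqrt (1 - η^2) with hsdef
  have hs0 : 0 ≤ s := Real.sqrt_nonneg _
  have hs : s^2 = 1 - η^2 := Real.sq_sqrt (by nlinarith)
  set g := Real.sqrt (1 - γ^2) with hgdef
  have hγ1 : γ^2 ≤ 1 := by nlinarith [sq_nonneg η]
  have hg0 : 0 ≤ g := Real.sqrt_nonneg _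
  have hg : g^2 = 1 - γ^2 := Real.sq_sqrt (by linarith)
  have hηg : η * g = 2 * γ := aux_etag η γ g hη0 hγ0 hg0 hg hγ2
  set u := w - y with hu
  set a := z - y with ha
  have hA : t * r < ‖a‖ := by
    have := hz1
    rw [Metric.mem_closedBall, dist_eq_norm] at this
    push_neg at this
    exact this
  have hqle : ⟪a, θ⟫ ≤ γ * ‖a‖ := by
    have := hz2
    simp only [Set.mem_setOf_eq, not_lt] at this
    exact this
  have hple : η * ‖u‖ < ⟪u, θ⟫ := hmem
  have hwz : ‖u - a‖ ≤ r := by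
    have h1 : dist w z ≤ r := hw
    rw [dist_eq_norm] at h1
    have he : u - a = w - z := by rw [hu, ha]; abel
    rw [he]; exact h1
  set p := ⟪u, θ⟫ with hp
  set q := ⟪a, θ⟫ with hq
  set P := ‖u - p • θ‖ with hP
  set Q := ‖a - q • θ‖ with hQ
  have hθ2 : ⟪θ, θ⟫ = 1 := by
    rw [real_inner_self_eq_norm_sq, hθ]; norm_num
  have hPU : p^2 + P^2 = ‖u‖^2 := by
    have h1 : P^2 = ‖u‖^2 - 2*⟪u, p • θ⟫ + ‖p • θ‖^2 := by
      rw [hP]; rw [@norm_sub_sq_real]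
    have h2 : ⟪u, p • θ⟫ = p * p := by rw [real_inner_smul_right]
    have h3 : ‖p • θ‖^2 = p^2 := by rw [norm_smul, hθ]; simp [sq_abs]
    rw [h1, h2, h3]; ring
  have hQA : q^2 + Q^2 = ‖a‖^2 := by
    have h1 : Q^2 = ‖a‖^2 - 2*⟪a, q • θ⟫ + ‖q • θ‖^2 := by
      rw [hQ]; rw [@norm_sub_sq_real]
    have h2 : ⟪a, q • θ⟫ = q * q := by rw [real_inner_smul_right]
    have h3 : ‖q • θ‖^2 = q^2 := by rw [norm_smul, hθ]; simp [sq_abs]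
    rw [h1, h2, h3]; ring
  have hinner : ⟪u, a⟫ ≤ p*q + P*Q := by
    have h1 : ⟪u - p • θ, a - q • θ⟫ = ⟪u, a⟫ - p*q := by
      have hqa : ⟪θ, a⟫ = q := by rw [real_inner_comm]
      have hpu : ⟪u, θ⟫ = p := hp.symm
      simp only [inner_sub_left, inner_sub_right, real_inner_smul_left,
        real_inner_smul_right, hθ2, hqa, hpu]
      ring
    have h2 : ⟪u - p • θ, a - q • θ⟫ ≤ P*Q := real_inner_le_norm _ _
    linarith
  have hD : ‖u - a‖^2 = (p^2 + P^2) - 2*⟪u, a⟫ + (q^2 + Q^2) := by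
    rw [hPU, hQA, @norm_sub_sq_real]
  have hkey : γ^2 * ‖a‖^2 ≤ (p - q)^2 + (P - Q)^2 :=
    key_arith η γ s g ‖u‖ ‖a‖ p P q Q hη0 hη1 hs0 hs hγ0 hg0 hg hηg
      (norm_nonneg _) (norm_nonneg _) hple.le hqle (norm_nonneg _) (norm_nonneg _) hPU hQA
  have h4 : (p - q)^2 + (P - Q)^2 ≤ ‖u - a‖^2 := aux_expand _ _ _ _ _ _ hD hinner
  have hfin : r^2 < ‖u - a‖^2 := aux_final γ t r ‖a‖ _ hγ0 ht0 hr hγt hA (le_trans hkey h4)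
  have hle : ‖u - a‖^2 ≤ r^2 := pow_le_pow_left₀ (norm_nonneg _) hwz 2
  linarith
end

section
/- Suppose 0 < η ≤ 1 and 0 < s ≤ n. Then there is a constant c = c(n, s, η) > 0 such that for every set A ⊆ ℝⁿ with H^s(A) < ∞, for H^s-almost every x ∈ A, limsup_{r→0⁺} inf_{θ ∈ S^{n−1}} H^s( A ∩ B(x,r) \ H(x,θ,η) ) / r^s ≥ c. -/
open MeasureTheory Metric Filter Set
open scoped ENNReal Topology RealInnerProductSpace


namespace NonsymAux
lemma exists_cover {n : ℕ} (s : ℝ) (S : Set (EuclideanSpace ℝ (Fin n))) (hS : μH[s] S ≠ ⊤)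
    {δ : ℝ≥0∞} (hδ : 0 < δ) {ε : ℝ≥0∞} (hε : ε ≠ 0) :
    ∃ U : ℕ → Set (EuclideanSpace ℝ (Fin n)), S ⊆ ⋃ i, U i ∧ (∀ i, EMetric.diam (U i) ≤ δ) ∧
      ∑' i, ⨆ _ : (U i).Nonempty, EMetric.diam (U i) ^ s ≤ μH[s] S + ε := by
  have h := MeasureTheory.Measure.hausdorffMeasure_apply s S
  have hle : (⨅ (t : ℕ → Set (EuclideanSpace ℝ (Fin n))) (_ : S ⊆ ⋃ i, t i)
      (_ : ∀ i, EMetric.diam (t i) ≤ δ),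
      ∑' i, ⨆ _ : (t i).Nonempty, EMetric.diam (t i) ^ s) ≤ μH[s] S := by
    conv_rhs => rw [h]
    exact le_iSup₂ (f := fun (r : ℝ≥0∞) (_ : 0 < r) =>
      ⨅ (t : ℕ → Set (EuclideanSpace ℝ (Fin n))) (_ : S ⊆ ⋃ i, t i)
      (_ : ∀ i, EMetric.diam (t i) ≤ r),
      ∑' i, ⨆ _ : (t i).Nonempty, EMetric.diam (t i) ^ s) δ hδ
  have hlt := lt_of_le_of_lt hle (ENNReal.lt_add_right hS hε)
  simp only [iInf_lt_iff] at hlt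
  obtain ⟨U, h1, h2, h3⟩ := hlt
  exact ⟨U, h1, h2, h3.le⟩

lemma ball_cover {n : ℕ} {ε : ℝ} (hε : 0 < ε) :
    ∃ Q : Finset (EuclideanSpace ℝ (Fin n)), ∀ (x : EuclideanSpace ℝ (Fin n)) (r : ℝ), 0 < r →
      closedBall x r ⊆ ⋃ q ∈ Q, closedBall (x + r • q) (ε * r) := by
  have hc : TotallyBounded (closedBall (0 : EuclideanSpace ℝ (Fin n)) 1) :=
    (isCompact_closedBall _ _).totallyBounded
  rw [Metric.totallyBounded_iff] at hc
  obtain ⟨t, htf, hcov⟩ := hc ε hε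
  refine ⟨htf.toFinset, fun x r hr z hz => ?_⟩
  have hu : r⁻¹ • (z - x) ∈ closedBall (0 : EuclideanSpace ℝ (Fin n)) 1 := by
    simp only [mem_closedBall, dist_zero_right, norm_smul, norm_inv, Real.norm_eq_abs,
      abs_of_pos hr]
    rw [mem_closedBall, dist_eq_norm] at hz
    rw [inv_mul_le_iff₀ hr, mul_one]
    exact hz
  obtain ⟨q, hqt, hq⟩ := Set.mem_iUnion₂.1 (hcov hu)
  refine Set.mem_iUnion₂.2 ⟨q, htf.mem_toFinset.2 hqt, ?_⟩
  have : z - (x + r • q) = r • (r⁻¹ • (z - x) - q) := by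
    rw [smul_sub, smul_smul, mul_inv_cancel₀ hr.ne', one_smul]
    abel
  rw [mem_closedBall, dist_eq_norm, this, norm_smul, Real.norm_eq_abs, abs_of_pos hr]
  rw [mem_ball, dist_eq_norm] at hq
  calc r * ‖r⁻¹ • (z - x) - q‖ ≤ r * ε := by
        exact mul_le_mul_of_nonneg_left hq.le hr.le
    _ = ε * r := mul_comm _ _

lemma sphere_net {n : ℕ} {ε : ℝ} (hε : 0 < ε) :
    ∃ T : Finset (EuclideanSpace ℝ (Fin n)), ∀ θ : EuclideanSpace ℝ (Fin n), ‖θ‖ = 1 →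
      ∃ v ∈ T, ‖θ - v‖ < ε := by
  have hc : TotallyBounded (sphere (0 : EuclideanSpace ℝ (Fin n)) 1) :=
    (isCompact_sphere _ _).totallyBounded
  rw [Metric.totallyBounded_iff] at hc
  obtain ⟨t, htf, hcov⟩ := hc ε hε
  refine ⟨htf.toFinset, fun θ hθ => ?_⟩
  have : θ ∈ sphere (0 : EuclideanSpace ℝ (Fin n)) 1 := by
    simp [mem_sphere, dist_zero_right, hθ]
  obtain ⟨v, hvt, hv⟩ := Set.mem_iUnion₂.1 (hcov this)
  exact ⟨v, htf.mem_toFinset.2 hvt, by rwa [mem_ball, dist_eq_norm] at hv⟩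

lemma small_of_pos {a : ℝ≥0∞} (ha : a ≠ 0) : ∃ c : ℝ, 0 < c ∧ ENNReal.ofReal c < a := by
  rcases eq_or_ne a ⊤ with rfl | hat
  · exact ⟨1, one_pos, by simp⟩
  · have h0 : 0 < a.toReal := ENNReal.toReal_pos ha hat
    refine ⟨a.toReal / 2, by linarith, ?_⟩
    conv_rhs => rw [← ENNReal.ofReal_toReal hat]
    exact (ENNReal.ofReal_lt_ofReal_iff_of_nonneg (by linarith)).2 (by linarith)

lemma lower_density {n : ℕ} {s : ℝ} (hs : 0 < s) (W : Set (EuclideanSpace ℝ (Fin n)))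
    (hW : μH[s] W ≠ ⊤) :
    μH[s] {x | x ∈ W ∧ ∃ ρ₀ > (0:ℝ), ∀ r ∈ Set.Ioo (0:ℝ) ρ₀,
      μH[s] (W ∩ closedBall x r) < ENNReal.ofReal (r ^ s / 2)} = 0 := by
  set T := {x | x ∈ W ∧ ∃ ρ₀ > (0:ℝ), ∀ r ∈ Set.Ioo (0:ℝ) ρ₀,
      μH[s] (W ∩ closedBall x r) < ENNReal.ofReal (r ^ s / 2)} with hTdef
  set Tk := fun k : ℕ => {x | x ∈ W ∧ ∀ r ∈ Set.Ioo (0:ℝ) (1/(k+1)),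
      μH[s] (W ∩ closedBall x r) < ENNReal.ofReal (r ^ s / 2)} with hTkdef
  have hsub : T ⊆ ⋃ k, Tk k := by
    rintro x ⟨hxW, ρ₀, hρ₀, hx⟩
    obtain ⟨k, hk⟩ := exists_nat_one_div_lt hρ₀
    exact Set.mem_iUnion.2 ⟨k, hxW, fun r hr => hx r ⟨hr.1, hr.2.trans hk⟩⟩
  have hTk0 : ∀ k, μH[s] (Tk k) = 0 := by
    intro k
    have hkpos : (0:ℝ) < 1/(k+1) := by positivity
    have hTkW : Tk k ⊆ W := fun x hx => hx.1
    have hfin : μH[s] (Tk k) ≠ ⊤ := (lt_of_le_of_lt (measure_mono hTkW) hW.lt_top).ne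
    -- show 2 * μ ≤ μ + ε for all ε
    have key : ∀ ε : ℝ≥0∞, ε ≠ 0 → 2 * μH[s] (Tk k) ≤ μH[s] (Tk k) + ε := by
      intro ε hε
      have hδpos : (0:ℝ≥0∞) < ENNReal.ofReal (1/(2*(k+1))) := by
        rw [ENNReal.ofReal_pos]; positivity
      obtain ⟨U, hcov, hdiam, hsum⟩ := exists_cover s (Tk k) hfin hδpos hε
      have hterm : ∀ i, 2 * μH[s] (Tk k ∩ U i) ≤
          ⨆ _ : (U i).Nonempty, EMetric.diam (U i) ^ s := by
        intro i
        rcases Set.eq_empty_or_nonempty (Tk k ∩ U i) with he | ⟨xi, hxiT, hxiU⟩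
        · rw [he]; simp
        have hUne : (U i).Nonempty := ⟨xi, hxiU⟩
        rw [iSup_pos hUne]
        have hdfin : EMetric.diam (U i) ≠ ⊤ :=
          (lt_of_le_of_lt (hdiam i) ENNReal.ofReal_lt_top).ne
        set di := Metric.diam (U i) with hdi
        have hdile : di ≤ 1/(2*(k+1)) :=
          ENNReal.toReal_le_of_le_ofReal (by positivity) (hdiam i)
        have hUball : ∀ r : ℝ, di ≤ r → U i ⊆ closedBall xi r := by
          intro r hr z hz
          exact mem_closedBall.2 <|
            (Metric.dist_le_diam_of_mem (Metric.isBounded_iff_ediam_ne_top.2 hdfin) hz hxiU).trans hr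
        rcases le_or_gt di 0 with hd0 | hd0
        · -- diameter zero case : measure is 0
          have hz : μH[s] (Tk k ∩ U i) = 0 := by
            by_contra h0
            obtain ⟨c, hc0, hc⟩ := small_of_pos h0
            set r := min ((2*c) ^ s⁻¹) (1/(2*(k+1))) with hrdef
            have hrpos : 0 < r := by
              apply lt_min _ (by positivity)
              exact Real.rpow_pos_of_pos (by linarith) _
            have hrIoo : r ∈ Set.Ioo (0:ℝ) (1/(k+1)) := by
              constructor
              · exact hrpos
              · calc r ≤ 1/(2*(k+1)) := min_le_right _ _
                  _ < 1/(k+1) := by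
                    apply div_lt_div_of_pos_left one_pos (by positivity) (by linarith)
            have hrs : r ^ s ≤ 2 * c := by
              calc r ^ s ≤ ((2*c) ^ s⁻¹) ^ s := by
                    apply Real.rpow_le_rpow hrpos.le (min_le_left _ _) hs.le
                _ = (2*c) ^ (s⁻¹ * s) := (Real.rpow_mul (by linarith) s⁻¹ s).symm
                _ = 2 * c := by rw [inv_mul_cancel₀ hs.ne', Real.rpow_one]
            have hle1 : μH[s] (Tk k ∩ U i) ≤ ENNReal.ofReal (r ^ s / 2) := by
              refine le_of_lt ?_
              calc μH[s] (Tk k ∩ U i) ≤ μH[s] (W ∩ closedBall xi r) := by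
                    apply measure_mono
                    rintro z ⟨hzT, hzU⟩
                    exact ⟨hzT.1, hUball r (hd0.trans hrpos.le) hzU⟩
                _ < ENNReal.ofReal (r ^ s / 2) := hxiT.2 r hrIoo
            have : μH[s] (Tk k ∩ U i) ≤ ENNReal.ofReal c := by
              refine hle1.trans (ENNReal.ofReal_le_ofReal ?_)
              linarith
            exact absurd (lt_of_le_of_lt this hc) (lt_irrefl _)
          rw [hz, mul_zero]
          exact zero_le
        · -- positive diameter
          have hdIoo : di ∈ Set.Ioo (0:ℝ) (1/(k+1)) := by
            refine ⟨hd0, lt_of_le_of_lt hdile ?_⟩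
            apply div_lt_div_of_pos_left one_pos (by positivity) (by linarith)
          have h1 : μH[s] (Tk k ∩ U i) ≤ ENNReal.ofReal (di ^ s / 2) := by
            refine le_of_lt ?_
            calc μH[s] (Tk k ∩ U i) ≤ μH[s] (W ∩ closedBall xi di) := by
                  apply measure_mono
                  rintro z ⟨hzT, hzU⟩
                  exact ⟨hzT.1, hUball di le_rfl hzU⟩
              _ < ENNReal.ofReal (di ^ s / 2) := hxiT.2 di hdIoo
          calc 2 * μH[s] (Tk k ∩ U i) ≤ 2 * ENNReal.ofReal (di ^ s / 2) :=
                mul_le_mul_right h1 2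
            _ = ENNReal.ofReal (di ^ s) := by
                rw [← ENNReal.ofReal_ofNat, ← ENNReal.ofReal_mul (by norm_num)]
                congr 1
                ring
            _ = EMetric.diam (U i) ^ s := by
                rw [← ENNReal.ofReal_rpow_of_pos hd0]
                rw [hdi, Metric.diam]; exact congrArg (· ^ s) (ENNReal.ofReal_toReal hdfin)
      calc 2 * μH[s] (Tk k) ≤ 2 * ∑' i, μH[s] (Tk k ∩ U i) := by
            apply mul_le_mul_right
            have : Tk k ⊆ ⋃ i, Tk k ∩ U i := by
              intro x hx
              obtain ⟨i, hi⟩ := Set.mem_iUnion.1 (hcov hx)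
              exact Set.mem_iUnion.2 ⟨i, hx, hi⟩
            exact (measure_mono this).trans (measure_iUnion_le _)
        _ = ∑' i, 2 * μH[s] (Tk k ∩ U i) := ENNReal.tsum_mul_left.symm
        _ ≤ ∑' i, ⨆ _ : (U i).Nonempty, EMetric.diam (U i) ^ s :=
            ENNReal.tsum_le_tsum hterm
        _ ≤ μH[s] (Tk k) + ε := hsum
    -- conclude
    by_contra h0
    have h1 : μH[s] (Tk k) + μH[s] (Tk k) ≤ μH[s] (Tk k) + μH[s] (Tk k) / 2 := by
      have := key (μH[s] (Tk k) / 2) (by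
        simp only [ne_eq, ENNReal.div_eq_zero_iff]
        push_neg
        exact ⟨h0, by norm_num⟩)
      calc μH[s] (Tk k) + μH[s] (Tk k) = 2 * μH[s] (Tk k) := (two_mul _).symm
        _ ≤ μH[s] (Tk k) + μH[s] (Tk k) / 2 := this
    have h2 : μH[s] (Tk k) ≤ μH[s] (Tk k) / 2 :=
      ENNReal.add_le_add_iff_left hfin |>.1 h1
    exact absurd h2 (not_le.2 (ENNReal.half_lt_self h0 hfin))
  refine le_antisymm ?_ (zero_le)
  calc μH[s] T ≤ ∑' k, μH[s] (Tk k) := (measure_mono hsub).trans (measure_iUnion_le _)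
    _ = 0 := by simp [hTk0]

lemma upper_reg {n : ℕ} {s : ℝ} (hs : 0 < s) (E : Set (EuclideanSpace ℝ (Fin n))) :
    μH[s] {z | z ∈ E ∧ ∀ ρ₀ > (0:ℝ), ∃ ρ ∈ Set.Ioo (0:ℝ) ρ₀,
      ENNReal.ofReal (2 * 8 ^ s * ρ ^ s) < μH[s] (E ∩ closedBall z ρ)} ≤ μH[s] E / 2 := by
  set G : Set (EuclideanSpace ℝ (Fin n)) := {z | z ∈ E ∧ ∀ ρ₀ > (0:ℝ), ∃ ρ ∈ Set.Ioo (0:ℝ) ρ₀,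
      ENNReal.ofReal (2 * 8 ^ s * ρ ^ s) < μH[s] (E ∩ closedBall z ρ)} with hGdef
  rcases Set.eq_empty_or_nonempty G with hGe | hGne
  · rw [hGe]; simp
  rw [MeasureTheory.Measure.hausdorffMeasure_apply s G]
  refine iSup₂_le fun r hr => ?_
  -- choose a real scale δ0 with ofReal δ0 ≤ r
  obtain ⟨δ0, hδ0pos, hδ0r⟩ : ∃ δ0 : ℝ, 0 < δ0 ∧ ENNReal.ofReal δ0 ≤ r := by
    rcases eq_or_ne r ⊤ with rfl | hrt
    · exact ⟨1, one_pos, le_top⟩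
    · exact ⟨r.toReal, ENNReal.toReal_pos hr.ne' hrt,
        by rw [ENNReal.ofReal_toReal hrt]⟩
  set ρmax := δ0 / 16 with hρmax
  have hρmaxpos : 0 < ρmax := by positivity
  -- choice of radii
  have hG : ∀ z ∈ G, ∃ ρ : ℝ, ρ ∈ Set.Ioo (0:ℝ) ρmax ∧
      ENNReal.ofReal (2 * 8 ^ s * ρ ^ s) < μH[s] (E ∩ closedBall z ρ) := by
    intro z hz
    obtain ⟨ρ, hρ1, hρ2⟩ := hz.2 ρmax hρmaxpos
    exact ⟨ρ, hρ1, hρ2⟩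
  classical
  set ρfun : EuclideanSpace ℝ (Fin n) → ℝ := fun z => if h : z ∈ G then (hG z h).choose else 0 with hρfun
  have hρfun_mem : ∀ z (h : z ∈ G), ρfun z ∈ Set.Ioo (0:ℝ) ρmax := by
    intro z h; rw [hρfun]; simp only [dif_pos h]; exact (hG z h).choose_spec.1
  have hρfun_meas : ∀ z (h : z ∈ G),
      ENNReal.ofReal (2 * 8 ^ s * (ρfun z) ^ s) < μH[s] (E ∩ closedBall z (ρfun z)) := by
    intro z h; rw [hρfun]; simp only [dif_pos h]; exact (hG z h).choose_spec.2
  -- Vitali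
  obtain ⟨u, huG, hdisj, hcov⟩ :=
    Vitali.exists_disjoint_subfamily_covering_enlargement_closedBall G id ρfun ρmax
      (fun z hz => (hρfun_mem z hz).2.le) 4 (by norm_num)
  have hucount : u.Countable := by
    apply Set.PairwiseDisjoint.countable_of_nonempty_interior hdisj
    intro z hz
    have hzpos := (hρfun_mem z (huG hz)).1
    exact Set.Nonempty.mono ball_subset_interior_closedBall
      (Metric.nonempty_ball.2 hzpos)
  obtain ⟨f, hfinj⟩ : ∃ f : ↥u → ℕ, Function.Injective f := by
    haveI := hucount.to_subtype
    exact ⟨_, (Countable.exists_injective_nat ↥u).choose_spec⟩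
  set B5 : ↥u → Set (EuclideanSpace ℝ (Fin n)) := fun b => closedBall (b : EuclideanSpace ℝ (Fin n)) (4 * ρfun (b : EuclideanSpace ℝ (Fin n))) with hB5
  set U : ℕ → Set (EuclideanSpace ℝ (Fin n)) := fun i => ⋃ (b : ↥u) (_ : f b = i), B5 b with hU
  have hUsub : ∀ i (b : ↥u), f b = i → U i ⊆ B5 b := by
    intro i b hfb z hz
    rw [hU] at hz
    simp only [Set.mem_iUnion] at hz
    obtain ⟨b', hb', hz⟩ := hz
    rwa [hfinj (hb'.trans hfb.symm)] at hz
  have hGcov : G ⊆ ⋃ i, U i := by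
    intro z hz
    obtain ⟨b, hbu, hb⟩ := hcov z hz
    have hzb : z ∈ B5 ⟨b, hbu⟩ := by
      apply hb
      simp only [id_eq]
      exact mem_closedBall_self (hρfun_mem z hz).1.le
    refine Set.mem_iUnion.2 ⟨f ⟨b, hbu⟩, ?_⟩
    rw [hU]
    simp only [Set.mem_iUnion]
    exact ⟨⟨b, hbu⟩, rfl, hzb⟩
  have hB5diam : ∀ b : ↥u, EMetric.diam (B5 b) ≤ ENNReal.ofReal (8 * ρfun (b:EuclideanSpace ℝ (Fin n))) := by
    intro b
    refine EMetric.diam_le fun z hz w hw => ?_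
    rw [edist_dist]
    apply ENNReal.ofReal_le_ofReal
    calc dist z w ≤ dist z (b:EuclideanSpace ℝ (Fin n)) + dist (b:EuclideanSpace ℝ (Fin n)) w := dist_triangle _ _ _
      _ ≤ 4 * ρfun (b:EuclideanSpace ℝ (Fin n)) + 4 * ρfun (b:EuclideanSpace ℝ (Fin n)) := by
          refine add_le_add (mem_closedBall.1 hz) ?_
          rw [dist_comm]; exact mem_closedBall.1 hw
      _ = 8 * ρfun (b:EuclideanSpace ℝ (Fin n)) := by ring
  have hUdiam : ∀ i, EMetric.diam (U i) ≤ r := by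
    intro i
    by_cases h : ∃ b : ↥u, f b = i
    · obtain ⟨b, hb⟩ := h
      refine le_trans (EMetric.diam_mono (hUsub i b hb)) ?_
      refine le_trans (hB5diam b) (le_trans (ENNReal.ofReal_le_ofReal ?_) hδ0r)
      have := (hρfun_mem (b:EuclideanSpace ℝ (Fin n)) (huG b.2)).2
      rw [hρmax] at this
      linarith
    · have : U i = ∅ := by
        rw [hU]
        simp only [Set.iUnion_eq_empty]
        intro b
        push_neg at h
        simp [h b]
      rw [this]
      exact Metric.ediam_empty.le.trans zero_le
  -- the sum bound
  have hsum : (∑' i, ⨆ _ : (U i).Nonempty, EMetric.diam (U i) ^ s) ≤ μH[s] E / 2 := by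
    set g : ↥u → ℝ≥0∞ := fun b => μH[s] (E ∩ closedBall (b:EuclideanSpace ℝ (Fin n)) (ρfun (b:EuclideanSpace ℝ (Fin n)))) / 2 with hg
    have hterm : ∀ i, (⨆ _ : (U i).Nonempty, EMetric.diam (U i) ^ s) ≤
        ∑' b : ↥u, if i = f b then g b else 0 := by
      intro i
      rcases Set.eq_empty_or_nonempty (U i) with he | hne
      · rw [he]; simp
      rw [iSup_pos hne]
      obtain ⟨z, hz⟩ := hne
      rw [hU] at hz
      simp only [Set.mem_iUnion] at hz
      obtain ⟨b, hfb, -⟩ := hz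
      have hρpos := (hρfun_mem (b:EuclideanSpace ℝ (Fin n)) (huG b.2)).1
      have h1 : EMetric.diam (U i) ^ s ≤ g b := by
        have hd : EMetric.diam (U i) ≤ ENNReal.ofReal (8 * ρfun (b:EuclideanSpace ℝ (Fin n))) :=
          le_trans (EMetric.diam_mono (hUsub i b hfb)) (hB5diam b)
        have h2 : EMetric.diam (U i) ^ s ≤ ENNReal.ofReal ((8 * ρfun (b:EuclideanSpace ℝ (Fin n))) ^ s) := by
          rw [← ENNReal.ofReal_rpow_of_pos (by linarith)]
          exact ENNReal.rpow_le_rpow hd hs.le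
        refine h2.trans ?_
        rw [hg]
        rw [ENNReal.le_div_iff_mul_le (by norm_num) (by norm_num)]
        have : ENNReal.ofReal ((8 * ρfun (b:EuclideanSpace ℝ (Fin n))) ^ s) * 2 =
            ENNReal.ofReal (2 * 8 ^ s * (ρfun (b:EuclideanSpace ℝ (Fin n))) ^ s) := by
          rw [← ENNReal.ofReal_ofNat, ← ENNReal.ofReal_mul (by positivity)]
          congr 1
          rw [Real.mul_rpow (by norm_num) hρpos.le]
          ring
        rw [this]
        exact (hρfun_meas (b:EuclideanSpace ℝ (Fin n)) (huG b.2)).le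
      calc EMetric.diam (U i) ^ s ≤ g b := h1
        _ = (if i = f b then g b else 0) := by rw [if_pos hfb.symm]
        _ ≤ ∑' b' : ↥u, if i = f b' then g b' else 0 := ENNReal.le_tsum b
    calc (∑' i, ⨆ _ : (U i).Nonempty, EMetric.diam (U i) ^ s)
        ≤ ∑' i, ∑' b : ↥u, if i = f b then g b else 0 := ENNReal.tsum_le_tsum hterm
      _ = ∑' b : ↥u, ∑' i, if i = f b then g b else 0 := ENNReal.tsum_comm
      _ = ∑' b : ↥u, g b := by
          congr 1
          funext b
          exact tsum_ite_eq (f b) (fun _ => g b)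
      _ = (∑' b : ↥u, μH[s] (E ∩ closedBall (b:EuclideanSpace ℝ (Fin n)) (ρfun (b:EuclideanSpace ℝ (Fin n))))) / 2 := by
          rw [hg]
          simp only [div_eq_mul_inv]
          exact ENNReal.tsum_mul_right
      _ ≤ μH[s] E / 2 := by
          apply ENNReal.div_le_div_right
          have heq : ∀ b : ↥u, μH[s] (E ∩ closedBall (b:EuclideanSpace ℝ (Fin n)) (ρfun (b:EuclideanSpace ℝ (Fin n)))) =
              (μH[s]).restrict E (closedBall (b:EuclideanSpace ℝ (Fin n)) (ρfun (b:EuclideanSpace ℝ (Fin n)))) := by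
            intro b
            rw [Measure.restrict_apply measurableSet_closedBall, Set.inter_comm]
          rw [tsum_congr heq]
          haveI := hucount.to_subtype
          rw [← measure_iUnion ?_ (fun b => measurableSet_closedBall)]
          · calc (μH[s]).restrict E (⋃ b : ↥u, closedBall (b:EuclideanSpace ℝ (Fin n)) (ρfun (b:EuclideanSpace ℝ (Fin n))))
                ≤ (μH[s]).restrict E Set.univ := measure_mono (Set.subset_univ _)
              _ = μH[s] E := by rw [Measure.restrict_apply_univ]
          · intro b b' hbb'
            exact hdisj b.2 b'.2 (Subtype.coe_injective.ne hbb')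
  refine le_trans ?_ hsum
  exact iInf_le_of_le U (iInf_le_of_le hGcov (iInf_le_of_le hUdiam le_rfl))

end NonsymAux

-- main theorem skeleton (to be appended after aux lemmas)
set_option maxHeartbeats 2000000

/-- **Nonsymmetric upper density theorem.** For `0 < η ≤ 1` and `0 < s ≤ n` there is a
constant `c = c(n, s, η) > 0` such that for every `A ⊆ ℝⁿ` with `H^s(A) < ∞`, for
`H^s`-almost every `x ∈ A`,
`limsup_{r→0⁺} inf_{θ ∈ S^{n-1}} H^s(A ∩ B(x,r) \ H(x,θ,η)) / r^s ≥ c`. -/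
theorem nonsymmetric_upper_density (n : ℕ) (s η : ℝ) (hs0 : 0 < s) (hsn : s ≤ n)
    (hη0 : 0 < η) (hη1 : η ≤ 1) :
    ∃ c : ℝ≥0∞, 0 < c ∧
      ∀ A : Set (EuclideanSpace ℝ (Fin n)), μH[s] A < ⊤ →
        ∀ᵐ x ∂(μH[s] : Measure (EuclideanSpace ℝ (Fin n))).restrict A,
          c ≤ Filter.limsup (fun r : ℝ =>
              ⨅ θ : sphere (0 : EuclideanSpace ℝ (Fin n)) 1,
                μH[s] ((A ∩ closedBall x r) \
                  {y : EuclideanSpace ℝ (Fin n) |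
                    η * ‖y - x‖ < ⟪y - x, (θ : EuclideanSpace ℝ (Fin n))⟫}) /
                ENNReal.ofReal (r ^ s))
            (𝓝[>] (0 : ℝ)) := by
  classical
  have h2s : (0:ℝ) < 2 ^ s := Real.rpow_pos_of_pos (by norm_num) s
  have h3s : (0:ℝ) < 3 ^ s := Real.rpow_pos_of_pos (by norm_num) s
  have h8s : (0:ℝ) < 8 ^ s := Real.rpow_pos_of_pos (by norm_num) s
  obtain ⟨T, hT⟩ := NonsymAux.sphere_net (n := n) (ε := η/4) (by positivity)
  obtain ⟨Λ, hΛ4, hΛs⟩ : ∃ Λ:ℝ, 4 ≤ Λ ∧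
      16*(2:ℝ)^s*(2*(8:ℝ)^s)*(((T.card+1 : ℕ)):ℝ) ≤ Λ^s := by
    have hbasepos : (0:ℝ) < 16*(2:ℝ)^s*(2*(8:ℝ)^s)*(((T.card+1 : ℕ)):ℝ) := by positivity
    refine ⟨4 + (16*(2:ℝ)^s*(2*(8:ℝ)^s)*(((T.card+1 : ℕ)):ℝ)) ^ s⁻¹,
      le_add_of_nonneg_right (Real.rpow_pos_of_pos hbasepos _).le, ?_⟩
    have h1 : (16*(2:ℝ)^s*(2*(8:ℝ)^s)*(((T.card+1 : ℕ)):ℝ)) ^ s⁻¹ ≤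
        4 + (16*(2:ℝ)^s*(2*(8:ℝ)^s)*(((T.card+1 : ℕ)):ℝ)) ^ s⁻¹ :=
      le_add_of_nonneg_left (by norm_num)
    calc 16*(2:ℝ)^s*(2*(8:ℝ)^s)*(((T.card+1 : ℕ)):ℝ)
        = ((16*(2:ℝ)^s*(2*(8:ℝ)^s)*(((T.card+1 : ℕ)):ℝ)) ^ s⁻¹) ^ s := by
          rw [← Real.rpow_mul hbasepos.le, inv_mul_cancel₀ hs0.ne', Real.rpow_one]
      _ ≤ _ := Real.rpow_le_rpow (Real.rpow_pos_of_pos hbasepos _).le h1 hs0.le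
  have hΛpos : (0:ℝ) < Λ := lt_of_lt_of_le (by norm_num) hΛ4
  have hΛspos : (0:ℝ) < Λ ^ s := Real.rpow_pos_of_pos hΛpos s
  obtain ⟨Q, hQ⟩ := NonsymAux.ball_cover (n := n) (ε := (η/4) / Λ) (by positivity)
  have hdrs : ∀ r : ℝ, 0 < r → (2*r/Λ)^s = 2^s * r^s / Λ^s := by
    intro r hr
    rw [Real.div_rpow (by positivity) hΛpos.le, Real.mul_rpow (by norm_num) hr.le]
  obtain ⟨τ, cr, hτpos, hcrpos, hτd, hcrd, hmd⟩ : ∃ τ cr : ℝ, 0 < τ ∧ 0 < cr ∧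
      (∀ r : ℝ, 0 < r → ((Q.card:ℝ)+1) * (τ * ((2*r/Λ)^s)) = r^s/8) ∧
      (∀ r : ℝ, 0 < r → cr * (3*r)^s = τ * ((2*r/Λ)^s) / 2) ∧
      (∀ r : ℝ, 0 < r → (((T.card+1 : ℕ)):ℝ) * ((2*(8:ℝ)^s) * ((2*r/Λ)^s)) ≤ r^s/16) := by
    refine ⟨Λ^s / ((2:ℝ)^s * 8 * ((Q.card:ℝ)+1)),
      (Λ^s / ((2:ℝ)^s * 8 * ((Q.card:ℝ)+1))) * (2:ℝ)^s / (Λ^s * 2 * 3^s),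
      by positivity, by positivity, ?_, ?_, ?_⟩
    · intro r hr
      rw [hdrs r hr]
      have hN1 : (0:ℝ) < (Q.card:ℝ)+1 := by positivity
      field_simp
    · intro r hr
      rw [hdrs r hr, Real.mul_rpow (by norm_num) hr.le]
      field_simp
    · intro r hr
      rw [hdrs r hr]
      have h1 : (((T.card+1 : ℕ)):ℝ) * (2*(8:ℝ)^s) * (2:ℝ)^s ≤ Λ^s / 16 := by
        nlinarith [hΛs]
      have h2 : (0:ℝ) ≤ r^s / Λ^s := by positivity
      calc (((T.card+1 : ℕ)):ℝ) * ((2*(8:ℝ)^s) * (2^s * r^s / Λ^s))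
          = ((((T.card+1 : ℕ)):ℝ) * (2*(8:ℝ)^s) * (2:ℝ)^s) * (r^s / Λ^s) := by ring
        _ ≤ (Λ^s / 16) * (r^s / Λ^s) := mul_le_mul_of_nonneg_right h1 h2
        _ = r^s/16 := by field_simp
  refine ⟨ENNReal.ofReal cr, ENNReal.ofReal_pos.2 hcrpos, ?_⟩
  intro A hA
  set F : Set (EuclideanSpace ℝ (Fin n)) → EuclideanSpace ℝ (Fin n) → ℝ≥0∞ := fun B x =>
    Filter.limsup (fun r : ℝ =>
      ⨅ θ : sphere (0 : EuclideanSpace ℝ (Fin n)) 1,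
        μH[s] ((B ∩ closedBall x r) \
          {y : EuclideanSpace ℝ (Fin n) |
            η * ‖y - x‖ < ⟪y - x, (θ : EuclideanSpace ℝ (Fin n))⟫}) /
        ENNReal.ofReal (r ^ s)) (𝓝[>] (0 : ℝ)) with hF
  obtain ⟨A', hAA', hA'meas, hA'inter, hA'restrict, hA'fin⟩ :
      ∃ A' : Set (EuclideanSpace ℝ (Fin n)), A ⊆ A' ∧ MeasurableSet A' ∧
        (∀ B : Set (EuclideanSpace ℝ (Fin n)), MeasurableSet B →
          μH[s] (A' ∩ B) = μH[s] (A ∩ B)) ∧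
        (μH[s] : Measure (EuclideanSpace ℝ (Fin n))).restrict A' =
          (μH[s] : Measure (EuclideanSpace ℝ (Fin n))).restrict A ∧
        μH[s] A' < ⊤ := by
    refine ⟨toMeasurable μH[s] A, subset_toMeasurable _ _, measurableSet_toMeasurable _ _,
      fun B hB => Measure.measure_toMeasurable_inter hB hA.ne, Measure.restrict_toMeasurable hA.ne, ?_⟩
    rw [measure_toMeasurable]
    exact hA
  have hHopen : ∀ (x : EuclideanSpace ℝ (Fin n)) (θv : EuclideanSpace ℝ (Fin n)),
      IsOpen {y : EuclideanSpace ℝ (Fin n) | η * ‖y - x‖ < ⟪y - x, θv⟫} := by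
    intro x θv
    apply isOpen_lt
    · exact continuous_const.mul (continuous_id.sub continuous_const).norm
    · exact (continuous_id.sub continuous_const).inner continuous_const
  have hFA : F A = F A' := by
    funext x
    rw [hF]
    apply Filter.limsup_congr
    apply Filter.Eventually.of_forall
    intro r
    apply iInf_congr
    intro θ
    congr 1
    have hmeas : MeasurableSet (closedBall x r \
        {y : EuclideanSpace ℝ (Fin n) | η * ‖y - x‖ < ⟪y - x, (θ : EuclideanSpace ℝ (Fin n))⟫}) :=
      measurableSet_closedBall.diff (hHopen x θ).measurableSet
    rw [Set.inter_diff_assoc, Set.inter_diff_assoc]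
    exact (hA'inter _ hmeas).symm
  have hE0 : μH[s] {x | x ∈ A' ∧ F A' x < ENNReal.ofReal cr} = 0 := by
    by_contra hEne
    -- Step 1: uniform badness radius
    obtain ⟨E', r₁, hr₁pos, hE'A, hE'ne, hE'fin, hbad⟩ :
        ∃ (E' : Set (EuclideanSpace ℝ (Fin n))) (r₁ : ℝ), 0 < r₁ ∧ E' ⊆ A' ∧
          μH[s] E' ≠ 0 ∧ μH[s] E' ≠ ⊤ ∧
          ∀ y ∈ E', ∀ R, R ∈ Set.Ioo (0:ℝ) r₁ →
            ∃ θ : sphere (0 : EuclideanSpace ℝ (Fin n)) 1,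
              μH[s] ((A' ∩ closedBall y R) \
                {z : EuclideanSpace ℝ (Fin n) |
                  η * ‖z - y‖ < ⟪z - y, (θ : EuclideanSpace ℝ (Fin n))⟫}) <
                ENNReal.ofReal (cr * R ^ s) := by
      have hEsub : {x | x ∈ A' ∧ F A' x < ENNReal.ofReal cr} ⊆
          ⋃ k : ℕ, {x | x ∈ A' ∧ ∀ r ∈ Set.Ioo (0:ℝ) (1/((k:ℝ)+1)),
            (⨅ θ : sphere (0 : EuclideanSpace ℝ (Fin n)) 1,
              μH[s] ((A' ∩ closedBall x r) \
                {y : EuclideanSpace ℝ (Fin n) |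
                  η * ‖y - x‖ < ⟪y - x, (θ : EuclideanSpace ℝ (Fin n))⟫}) /
              ENNReal.ofReal (r ^ s)) < ENNReal.ofReal cr} := by
        rintro x ⟨hxA, hxF⟩
        simp only [hF] at hxF
        have hev := Filter.eventually_lt_of_limsup_lt hxF
        rw [Filter.eventually_iff, mem_nhdsGT_iff_exists_Ioo_subset] at hev
        obtain ⟨u, hu, huIoo⟩ := hev
        obtain ⟨k, hk⟩ := exists_nat_one_div_lt (Set.mem_Ioi.1 hu)
        exact Set.mem_iUnion.2 ⟨k, hxA, fun r hr => huIoo ⟨hr.1, hr.2.trans hk⟩⟩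
      have hex : ∃ k : ℕ, μH[s] {x | x ∈ A' ∧ ∀ r ∈ Set.Ioo (0:ℝ) (1/((k:ℝ)+1)),
          (⨅ θ : sphere (0 : EuclideanSpace ℝ (Fin n)) 1,
            μH[s] ((A' ∩ closedBall x r) \
              {y : EuclideanSpace ℝ (Fin n) |
                η * ‖y - x‖ < ⟪y - x, (θ : EuclideanSpace ℝ (Fin n))⟫}) /
            ENNReal.ofReal (r ^ s)) < ENNReal.ofReal cr} ≠ 0 := by
        by_contra hall
        push_neg at hall
        refine hEne (le_antisymm ?_ (zero_le))
        refine (measure_mono hEsub).trans ((measure_iUnion_le _).trans ?_)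
        exact le_of_eq (ENNReal.tsum_eq_zero.2 hall)
      obtain ⟨k, hk⟩ := hex
      refine ⟨_, 1/((k:ℝ)+1), by positivity, fun x hx => hx.1, hk, ?_, ?_⟩
      · exact ((measure_mono (fun x hx => hx.1)).trans_lt hA'fin).ne
      · rintro y hy R hR
        have h2 := hy.2 R hR
        rw [iInf_lt_iff] at h2
        obtain ⟨θ, hθ⟩ := h2
        refine ⟨θ, ?_⟩
        have hRs : (0:ℝ) < R ^ s := Real.rpow_pos_of_pos hR.1 s
        rw [ENNReal.div_lt_iff (Or.inl (ENNReal.ofReal_pos.2 hRs).ne')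
          (Or.inl ENNReal.ofReal_ne_top)] at hθ
        rwa [← ENNReal.ofReal_mul hcrpos.le] at hθ
    -- Step 2: upper regularity on a further subset
    obtain ⟨W, r₂, hr₂pos, hWE', hWne, hWfin, hWreg⟩ :
        ∃ (W : Set (EuclideanSpace ℝ (Fin n))) (r₂ : ℝ), 0 < r₂ ∧ W ⊆ E' ∧
          μH[s] W ≠ 0 ∧ μH[s] W ≠ ⊤ ∧
          ∀ z ∈ W, ∀ ρ, ρ ∈ Set.Ioo (0:ℝ) r₂ →
            μH[s] (W ∩ closedBall z ρ) ≤ ENNReal.ofReal (2 * 8 ^ s * ρ ^ s) := by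
      have hG := NonsymAux.upper_reg (n := n) hs0 E'
      have hF0ne : μH[s] (E' \ {z | z ∈ E' ∧ ∀ ρ₀ > (0:ℝ), ∃ ρ ∈ Set.Ioo (0:ℝ) ρ₀,
          ENNReal.ofReal (2 * 8 ^ s * ρ ^ s) < μH[s] (E' ∩ closedBall z ρ)}) ≠ 0 := by
        intro h0
        have h1 : μH[s] E' ≤ μH[s] {z | z ∈ E' ∧ ∀ ρ₀ > (0:ℝ), ∃ ρ ∈ Set.Ioo (0:ℝ) ρ₀,
            ENNReal.ofReal (2 * 8 ^ s * ρ ^ s) < μH[s] (E' ∩ closedBall z ρ)} +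
            μH[s] (E' \ {z | z ∈ E' ∧ ∀ ρ₀ > (0:ℝ), ∃ ρ ∈ Set.Ioo (0:ℝ) ρ₀,
            ENNReal.ofReal (2 * 8 ^ s * ρ ^ s) < μH[s] (E' ∩ closedBall z ρ)}) := by
          refine (measure_mono ?_).trans (measure_union_le _ _)
          intro z hz
          by_cases h : z ∈ {z | z ∈ E' ∧ ∀ ρ₀ > (0:ℝ), ∃ ρ ∈ Set.Ioo (0:ℝ) ρ₀,
            ENNReal.ofReal (2 * 8 ^ s * ρ ^ s) < μH[s] (E' ∩ closedBall z ρ)}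
          exacts [Or.inl h, Or.inr ⟨hz, h⟩]
        rw [h0, add_zero] at h1
        exact absurd (h1.trans hG)
          (not_le.2 (ENNReal.half_lt_self hE'ne hE'fin))
      -- decompose by uniform radius
      have hFsub : (E' \ {z | z ∈ E' ∧ ∀ ρ₀ > (0:ℝ), ∃ ρ ∈ Set.Ioo (0:ℝ) ρ₀,
          ENNReal.ofReal (2 * 8 ^ s * ρ ^ s) < μH[s] (E' ∩ closedBall z ρ)}) ⊆
          ⋃ k : ℕ, {z | z ∈ E' ∧ ∀ ρ, ρ ∈ Set.Ioo (0:ℝ) (1/((k:ℝ)+1)) →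
            μH[s] (E' ∩ closedBall z ρ) ≤ ENNReal.ofReal (2 * 8 ^ s * ρ ^ s)} := by
        rintro z ⟨hzE, hzG⟩
        have hng : ¬ ∀ ρ₀ > (0:ℝ), ∃ ρ ∈ Set.Ioo (0:ℝ) ρ₀,
            ENNReal.ofReal (2 * 8 ^ s * ρ ^ s) < μH[s] (E' ∩ closedBall z ρ) :=
          fun h => hzG ⟨hzE, h⟩
        push_neg at hng
        obtain ⟨ρ₀, hρ₀pos, hρ₀⟩ := hng
        obtain ⟨k, hk⟩ := exists_nat_one_div_lt hρ₀pos
        refine Set.mem_iUnion.2 ⟨k, hzE, fun ρ hρ => ?_⟩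
        exact hρ₀ ρ ⟨hρ.1, hρ.2.trans hk⟩
      have hex : ∃ k : ℕ, μH[s] {z | z ∈ E' ∧ ∀ ρ, ρ ∈ Set.Ioo (0:ℝ) (1/((k:ℝ)+1)) →
          μH[s] (E' ∩ closedBall z ρ) ≤ ENNReal.ofReal (2 * 8 ^ s * ρ ^ s)} ≠ 0 := by
        by_contra hall
        push_neg at hall
        refine hF0ne (le_antisymm ?_ (zero_le))
        refine (measure_mono hFsub).trans ((measure_iUnion_le _).trans ?_)
        exact le_of_eq (ENNReal.tsum_eq_zero.2 hall)
      obtain ⟨k, hk⟩ := hex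
      refine ⟨_, 1/((k:ℝ)+1), by positivity, fun z hz => hz.1, hk, ?_, ?_⟩
      · exact ((measure_mono (fun z hz => hz.1)).trans_lt hE'fin.lt_top).ne
      · rintro z hz ρ hρ
        exact (measure_mono (Set.inter_subset_inter_left _ (fun w hw => hw.1))).trans
          (hz.2 ρ hρ)
    -- Step 3: pick a lower-density point of W
    obtain ⟨x, hxW, hxld⟩ : ∃ x ∈ W, ∀ ρ₀ > (0:ℝ), ∃ r ∈ Set.Ioo (0:ℝ) ρ₀,
        ENNReal.ofReal (r ^ s / 2) ≤ μH[s] (W ∩ closedBall x r) := by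
      have hT0 := NonsymAux.lower_density hs0 W hWfin
      by_contra hcon
      push_neg at hcon
      refine hWne (le_antisymm ?_ (zero_le))
      rw [← hT0]
      refine measure_mono fun z hz => ?_
      obtain ⟨ρ₀, hρ₀pos, hρ₀⟩ := hcon z hz
      refine ⟨hz, ρ₀, hρ₀pos, fun r hr => ?_⟩
      exact hρ₀ r hr
    -- Step 4: pick the working scale r and set d
    obtain ⟨r, hrIoo, hrmass⟩ := hxld (min (r₁/3) r₂) (by positivity)
    have hrpos : 0 < r := hrIoo.1
    have hrspos : (0:ℝ) < r ^ s := Real.rpow_pos_of_pos hrpos s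
    have h3r : 3 * r < r₁ := by
      have := hrIoo.2
      have h1 : r < r₁/3 := lt_of_lt_of_le this (min_le_left _ _)
      linarith
    have hrr₂ : r < r₂ := lt_of_lt_of_le hrIoo.2 (min_le_right _ _)
    set d : ℝ := 2 * r / Λ with hd
    have hdpos : 0 < d := by positivity
    have hdr : d ≤ r / 2 := by
      rw [hd, div_le_div_iff₀ hΛpos (by norm_num)]
      nlinarith
    have hdr₂ : d < r₂ := by linarith
    have hdspos : (0:ℝ) < d ^ s := Real.rpow_pos_of_pos hdpos s
    -- Step 5: heavy set S
    set HS := fun z : EuclideanSpace ℝ (Fin n) =>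
      ENNReal.ofReal (τ * d ^ s) ≤ μH[s] (W ∩ closedBall z ((η/4) * d)) with hHS
    have hLbound : μH[s] {z | (z ∈ W ∧ z ∈ closedBall x r) ∧ ¬ HS z} ≤
        ENNReal.ofReal (r ^ s / 8) := by
      have hcover := hQ x r hrpos
      have hrad : (η / 4 / Λ) * r = (η/4) * d / 2 := by
        rw [hd]; field_simp
      have hLsub : {z | (z ∈ W ∧ z ∈ closedBall x r) ∧ ¬ HS z} ⊆
          ⋃ q ∈ Q, ({z | (z ∈ W ∧ z ∈ closedBall x r) ∧ ¬ HS z} ∩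
            closedBall (x + r • q) ((η / 4 / Λ) * r)) := by
        intro z hz
        obtain ⟨q, hqQ, hq⟩ := Set.mem_iUnion₂.1 (hcover hz.1.2)
        exact Set.mem_iUnion₂.2 ⟨q, hqQ, hz, hq⟩
      refine (measure_mono hLsub).trans ((measure_biUnion_finset_le _ _).trans ?_)
      have hper : ∀ q ∈ Q, μH[s] ({z | (z ∈ W ∧ z ∈ closedBall x r) ∧ ¬ HS z} ∩
          closedBall (x + r • q) ((η / 4 / Λ) * r)) ≤ ENNReal.ofReal (τ * d ^ s) := by
        intro q hq
        rcases Set.eq_empty_or_nonempty ({z | (z ∈ W ∧ z ∈ closedBall x r) ∧ ¬ HS z} ∩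
          closedBall (x + r • q) ((η / 4 / Λ) * r)) with he | ⟨z₀, hz₀L, hz₀B⟩
        · rw [he]; simp
        have hsub : {z | (z ∈ W ∧ z ∈ closedBall x r) ∧ ¬ HS z} ∩
            closedBall (x + r • q) ((η / 4 / Λ) * r) ⊆ W ∩ closedBall z₀ ((η/4) * d) := by
          rintro w ⟨hw1, hw2⟩
          refine ⟨hw1.1.1, mem_closedBall.2 ?_⟩
          calc dist w z₀ ≤ dist w (x + r • q) + dist (x + r • q) z₀ := dist_triangle _ _ _
            _ ≤ (η / 4 / Λ) * r + (η / 4 / Λ) * r := by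
                refine add_le_add (mem_closedBall.1 hw2) ?_
                rw [dist_comm]; exact mem_closedBall.1 hz₀B
            _ = (η/4) * d := by rw [hrad]; ring
        refine (measure_mono hsub).trans ?_
        have := hz₀L.2
        rw [hHS] at this
        exact (not_le.1 this).le
      refine (Finset.sum_le_sum hper).trans ?_
      rw [Finset.sum_const]
      rw [nsmul_eq_mul]
      have : (Q.card : ℝ≥0∞) * ENNReal.ofReal (τ * d ^ s) =
          ENNReal.ofReal ((Q.card : ℝ) * (τ * d ^ s)) := by
        rw [ENNReal.ofReal_mul (Nat.cast_nonneg _), ENNReal.ofReal_natCast]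
      rw [this]
      refine ENNReal.ofReal_le_ofReal ?_
      have h1 : (Q.card : ℝ) * (τ * d ^ s) ≤ ((Q.card : ℝ) + 1) * (τ * d ^ s) := by
        nlinarith [mul_pos hτpos hdspos]
      calc (Q.card : ℝ) * (τ * d ^ s) ≤ ((Q.card : ℝ) + 1) * (τ * d ^ s) := h1
        _ = r ^ s / 8 := hτd r hrpos
    have hSmass : ENNReal.ofReal (3 * r ^ s / 8) ≤
        μH[s] {z | (z ∈ W ∧ z ∈ closedBall x r) ∧ HS z} := by
      by_contra hcon
      push_neg at hcon
      have hsplit : W ∩ closedBall x r ⊆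
          {z | (z ∈ W ∧ z ∈ closedBall x r) ∧ ¬ HS z} ∪
          {z | (z ∈ W ∧ z ∈ closedBall x r) ∧ HS z} := by
        intro z hz
        by_cases h : HS z
        exacts [Or.inr ⟨⟨hz.1, hz.2⟩, h⟩, Or.inl ⟨⟨hz.1, hz.2⟩, h⟩]
      have h1 : μH[s] (W ∩ closedBall x r) < ENNReal.ofReal (r ^ s / 2) := by
        calc μH[s] (W ∩ closedBall x r)
            ≤ μH[s] {z | (z ∈ W ∧ z ∈ closedBall x r) ∧ ¬ HS z} +
              μH[s] {z | (z ∈ W ∧ z ∈ closedBall x r) ∧ HS z} :=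
              (measure_mono hsplit).trans (measure_union_le _ _)
          _ ≤ ENNReal.ofReal (r ^ s / 8) +
              μH[s] {z | (z ∈ W ∧ z ∈ closedBall x r) ∧ HS z} :=
              add_le_add_left hLbound _
          _ < ENNReal.ofReal (r ^ s / 8) + ENNReal.ofReal (3 * r ^ s / 8) :=
              ENNReal.add_lt_add_left ENNReal.ofReal_ne_top hcon
          _ = ENNReal.ofReal (r ^ s / 2) := by
              rw [← ENNReal.ofReal_add (by positivity) (by positivity)]
              congr 1
              ring
      exact absurd hrmass (not_le.2 h1)
    -- Step 6: greedy selection of separated heavy points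
    have hgreedy : ∀ p : ℕ, p ≤ T.card + 1 → ∃ zf : Fin p → EuclideanSpace ℝ (Fin n),
        (∀ i, zf i ∈ {z | (z ∈ W ∧ z ∈ closedBall x r) ∧ HS z}) ∧
        (∀ i j, i ≠ j → d ≤ dist (zf i) (zf j)) := by
      intro p
      induction p with
      | zero => exact fun _ => ⟨fun i => i.elim0, fun i => i.elim0, fun i => i.elim0⟩
      | succ p ih =>
        intro hp
        obtain ⟨zf, hzfS, hzfsep⟩ := ih (Nat.le_of_succ_le hp)
        have hext : ∃ w ∈ {z | (z ∈ W ∧ z ∈ closedBall x r) ∧ HS z},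
            ∀ i, d ≤ dist w (zf i) := by
          by_contra hcon
          push_neg at hcon
          have hSsub : {z | (z ∈ W ∧ z ∈ closedBall x r) ∧ HS z} ⊆
              ⋃ i : Fin p, (W ∩ closedBall (zf i) d) := by
            intro w hw
            obtain ⟨i, hi⟩ := hcon w hw
            exact Set.mem_iUnion.2 ⟨i, hw.1.1, mem_closedBall.2 hi.le⟩
          have h1 : μH[s] {z | (z ∈ W ∧ z ∈ closedBall x r) ∧ HS z} ≤
              ∑' i : Fin p, μH[s] (W ∩ closedBall (zf i) d) :=
            (measure_mono hSsub).trans (measure_iUnion_le _)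
          have h2 : ∀ i : Fin p, μH[s] (W ∩ closedBall (zf i) d) ≤
              ENNReal.ofReal (2 * 8 ^ s * d ^ s) := fun i =>
            hWreg (zf i) (hzfS i).1.1 d ⟨hdpos, hdr₂⟩
          have h3 : μH[s] {z | (z ∈ W ∧ z ∈ closedBall x r) ∧ HS z} ≤
              ENNReal.ofReal ((p : ℝ) * (2 * 8 ^ s * d ^ s)) := by
            refine h1.trans ?_
            calc ∑' i : Fin p, μH[s] (W ∩ closedBall (zf i) d)
                ≤ ∑' _i : Fin p, ENNReal.ofReal (2 * 8 ^ s * d ^ s) :=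
                  ENNReal.tsum_le_tsum h2
              _ = (p : ℝ≥0∞) * ENNReal.ofReal (2 * 8 ^ s * d ^ s) := by
                  rw [tsum_fintype]
                  simp [Finset.sum_const, nsmul_eq_mul]
              _ = ENNReal.ofReal ((p : ℝ) * (2 * 8 ^ s * d ^ s)) := by
                  rw [ENNReal.ofReal_mul (Nat.cast_nonneg _), ENNReal.ofReal_natCast]
          have h4 : ((p : ℝ)) * (2 * 8 ^ s * d ^ s) ≤ r ^ s / 16 := by
            refine le_trans ?_ (hmd r hrpos)
            have hcast : (p : ℝ) ≤ ((T.card + 1 : ℕ) : ℝ) := by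
              exact_mod_cast Nat.le_of_succ_le hp
            have hnn : (0:ℝ) ≤ 2 * 8 ^ s * d ^ s := by positivity
            exact mul_le_mul_of_nonneg_right hcast hnn
          have h5 : μH[s] {z | (z ∈ W ∧ z ∈ closedBall x r) ∧ HS z} <
              ENNReal.ofReal (3 * r ^ s / 8) := by
            refine lt_of_le_of_lt (h3.trans (ENNReal.ofReal_le_ofReal h4)) ?_
            exact ENNReal.ofReal_lt_ofReal_iff_of_nonneg (by positivity) |>.2 (by linarith)
          exact absurd hSmass (not_le.2 h5)
        obtain ⟨w, hwS, hwd⟩ := hext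
        refine ⟨Fin.cons w zf, ?_, ?_⟩
        · intro i
          refine Fin.cases hwS (fun j => hzfS j) i
        · intro i j
          refine Fin.cases ?_ ?_ i
          · refine Fin.cases ?_ ?_ j
            · intro h; exact absurd rfl h
            · intro j' _
              simpa [Fin.cons_zero, Fin.cons_succ] using hwd j'
          · intro i'
            refine Fin.cases ?_ ?_ j
            · intro _
              have := hwd i'
              simp only [Fin.cons_zero, Fin.cons_succ]
              rwa [dist_comm]
            · intro j' hij'
              have hne : i' ≠ j' := fun h => hij' (by rw [h])
              simpa [Fin.cons_succ] using hzfsep i' j' hne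
    obtain ⟨zf, hzfS, hzfsep⟩ := hgreedy (T.card + 1) le_rfl
    -- Step 7: cone directions see all other points
    have hcone : ∀ i : Fin (T.card + 1), ∃ θ : sphere (0 : EuclideanSpace ℝ (Fin n)) 1,
        ∀ j : Fin (T.card + 1), j ≠ i →
          (η/2) * dist (zf j) (zf i) ≤ ⟪zf j - zf i, (θ : EuclideanSpace ℝ (Fin n))⟫ := by
      intro i
      obtain ⟨θ, hθ⟩ := hbad (zf i) (hWE' (hzfS i).1.1) (3*r) ⟨by linarith, h3r⟩
      refine ⟨θ, fun j hji => ?_⟩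
      have hheavy : ENNReal.ofReal (τ * d ^ s) ≤
          μH[s] (W ∩ closedBall (zf j) ((η/4) * d)) := (hzfS j).2
      have hβd : (η/4) * d ≤ d := by nlinarith
      have hsub2 : W ∩ closedBall (zf j) ((η/4) * d) ⊆ A' ∩ closedBall (zf i) (3*r) := by
        rintro w ⟨hw1, hw2⟩
        refine ⟨hE'A (hWE' hw1), mem_closedBall.2 ?_⟩
        have h1 : dist w (zf j) ≤ (η/4) * d := mem_closedBall.1 hw2
        have h2 : dist (zf j) x ≤ r := mem_closedBall.1 (hzfS j).1.2
        have h3 : dist x (zf i) ≤ r := by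
          rw [dist_comm]; exact mem_closedBall.1 (hzfS i).1.2
        calc dist w (zf i) ≤ dist w (zf j) + dist (zf j) x + dist x (zf i) :=
              dist_triangle4 _ _ _ _
          _ ≤ (η/4) * d + r + r := by linarith
          _ ≤ 3 * r := by linarith
      have hnonempty : (W ∩ closedBall (zf j) ((η/4) * d) ∩
          {z : EuclideanSpace ℝ (Fin n) |
            η * ‖z - zf i‖ < ⟪z - zf i, (θ : EuclideanSpace ℝ (Fin n))⟫}).Nonempty := by
        rw [Set.nonempty_iff_ne_empty]
        intro hcon
        have hsub3 : W ∩ closedBall (zf j) ((η/4) * d) ⊆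
            (A' ∩ closedBall (zf i) (3*r)) \
            {z : EuclideanSpace ℝ (Fin n) |
              η * ‖z - zf i‖ < ⟪z - zf i, (θ : EuclideanSpace ℝ (Fin n))⟫} := by
          intro w hw
          refine ⟨hsub2 hw, fun hwH => ?_⟩
          exact Set.eq_empty_iff_forall_notMem.1 hcon w ⟨hw, hwH⟩
        have hlt := lt_of_le_of_lt (hheavy.trans (measure_mono hsub3)) hθ
        rw [hcrd r hrpos] at hlt
        have : ENNReal.ofReal (τ * d ^ s / 2) ≤ ENNReal.ofReal (τ * d ^ s) :=
          ENNReal.ofReal_le_ofReal (by nlinarith)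
        exact absurd (hlt.trans_le this) (lt_irrefl _)
      obtain ⟨w, ⟨hwW, hwB⟩, hwH⟩ := hnonempty
      have hθnorm : ‖(θ : EuclideanSpace ℝ (Fin n))‖ = 1 := by
        have h := θ.2
        rwa [mem_sphere_zero_iff_norm] at h
      have hD : d ≤ dist (zf j) (zf i) := hzfsep j i hji
      rw [dist_eq_norm] at hD ⊢
      have hwv : ‖w - zf j‖ ≤ (η/4) * d := by
        rw [← dist_eq_norm]; exact mem_closedBall.1 hwB
      have hwu : ‖zf j - zf i‖ - ‖w - zf j‖ ≤ ‖w - zf i‖ := by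
        have htri : ‖zf j - zf i‖ ≤ ‖zf j - w‖ + ‖w - zf i‖ := by
          have := norm_add_le (zf j - w) (w - zf i)
          rwa [sub_add_sub_cancel] at this
        have hrev : ‖zf j - w‖ = ‖w - zf j‖ := norm_sub_rev _ _
        linarith
      have hinner1 : η * ‖w - zf i‖ < ⟪w - zf i, (θ : EuclideanSpace ℝ (Fin n))⟫ := hwH
      have hinner2 : ⟪w - zf j, (θ : EuclideanSpace ℝ (Fin n))⟫ ≤ ‖w - zf j‖ := by
        calc ⟪w - zf j, (θ : EuclideanSpace ℝ (Fin n))⟫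
            ≤ ‖w - zf j‖ * ‖(θ : EuclideanSpace ℝ (Fin n))‖ := real_inner_le_norm _ _
          _ = ‖w - zf j‖ := by rw [hθnorm, mul_one]
      have hsplitinner : ⟪zf j - zf i, (θ : EuclideanSpace ℝ (Fin n))⟫ =
          ⟪w - zf i, (θ : EuclideanSpace ℝ (Fin n))⟫ -
          ⟪w - zf j, (θ : EuclideanSpace ℝ (Fin n))⟫ := by
        rw [← inner_sub_left]
        congr 1
        abel
      rw [hsplitinner]
      have e1 : η * (‖zf j - zf i‖ - ‖w - zf j‖) ≤ η * ‖w - zf i‖ :=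
        mul_le_mul_of_nonneg_left hwu hη0.le
      have e3 : η * ‖w - zf j‖ ≤ ‖w - zf j‖ := by
        nlinarith [norm_nonneg (w - zf j)]
      have e2 : (η/2) * d ≤ (η/2) * ‖zf j - zf i‖ :=
        mul_le_mul_of_nonneg_left hD (by positivity)
      nlinarith [norm_nonneg (w - zf j)]
    choose θf hθf using hcone
    -- Step 8: pigeonhole on the net
    have hnormθ : ∀ i : Fin (T.card + 1), ‖(θf i : EuclideanSpace ℝ (Fin n))‖ = 1 := by
      intro i
      have h := (θf i).2
      rwa [mem_sphere_zero_iff_norm] at h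
    choose vf hvfT hvf using fun i => hT (θf i) (hnormθ i)
    have hcard : Fintype.card {v // v ∈ T} < Fintype.card (Fin (T.card + 1)) := by
      rw [Fintype.card_coe, Fintype.card_fin]
      omega
    obtain ⟨i, j, hij, hvij⟩ :=
      Fintype.exists_ne_map_eq_of_card_lt (fun i : Fin (T.card + 1) =>
        (⟨vf i, hvfT i⟩ : {v // v ∈ T})) hcard
    have hvv : vf i = vf j := congrArg Subtype.val hvij
    have hDpos : 0 < dist (zf j) (zf i) := lt_of_lt_of_le hdpos (hzfsep j i hij.symm)
    have h1 := hθf i j hij.symm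
    have h2 := hθf j i hij
    rw [dist_comm] at h2
    have hsum : η * dist (zf j) (zf i) ≤
        ⟪zf j - zf i, (θf i : EuclideanSpace ℝ (Fin n)) -
          (θf j : EuclideanSpace ℝ (Fin n))⟫ := by
      rw [inner_sub_right]
      have hneg : ⟪zf j - zf i, (θf j : EuclideanSpace ℝ (Fin n))⟫ =
          - ⟪zf i - zf j, (θf j : EuclideanSpace ℝ (Fin n))⟫ := by
        rw [← inner_neg_left]
        congr 1
        abel
      rw [hneg]
      linarith
    have hCS : ⟪zf j - zf i, (θf i : EuclideanSpace ℝ (Fin n)) -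
        (θf j : EuclideanSpace ℝ (Fin n))⟫ ≤
        dist (zf j) (zf i) * ‖(θf i : EuclideanSpace ℝ (Fin n)) -
          (θf j : EuclideanSpace ℝ (Fin n))‖ := by
      calc ⟪zf j - zf i, (θf i : EuclideanSpace ℝ (Fin n)) -
          (θf j : EuclideanSpace ℝ (Fin n))⟫
          ≤ ‖zf j - zf i‖ * ‖(θf i : EuclideanSpace ℝ (Fin n)) -
            (θf j : EuclideanSpace ℝ (Fin n))‖ := real_inner_le_norm _ _
        _ = dist (zf j) (zf i) * ‖(θf i : EuclideanSpace ℝ (Fin n)) -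
            (θf j : EuclideanSpace ℝ (Fin n))‖ := by rw [dist_eq_norm]
    have hθdist : ‖(θf i : EuclideanSpace ℝ (Fin n)) -
        (θf j : EuclideanSpace ℝ (Fin n))‖ < η/2 := by
      have hrw : (θf i : EuclideanSpace ℝ (Fin n)) - (θf j : EuclideanSpace ℝ (Fin n)) =
          ((θf i : EuclideanSpace ℝ (Fin n)) - vf i) -
          ((θf j : EuclideanSpace ℝ (Fin n)) - vf j) := by
        rw [hvv]
        abel
      rw [hrw]
      calc ‖((θf i : EuclideanSpace ℝ (Fin n)) - vf i) -
          ((θf j : EuclideanSpace ℝ (Fin n)) - vf j)‖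
          ≤ ‖(θf i : EuclideanSpace ℝ (Fin n)) - vf i‖ +
            ‖(θf j : EuclideanSpace ℝ (Fin n)) - vf j‖ := norm_sub_le _ _
        _ < η/4 + η/4 := add_lt_add (hvf i) (hvf j)
        _ = η/2 := by ring
    nlinarith [hsum, hCS, hθdist, hDpos, hη0]
  show ∀ᵐ x ∂(μH[s] : Measure (EuclideanSpace ℝ (Fin n))).restrict A,
    ENNReal.ofReal cr ≤ F A x
  rw [← hA'restrict, hFA]
  rw [MeasureTheory.ae_iff]
  have hincl : {x | ¬ ENNReal.ofReal cr ≤ F A' x} ⊆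
      toMeasurable μH[s] {x | x ∈ A' ∧ F A' x < ENNReal.ofReal cr} ∪ A'ᶜ := by
    intro z hz
    simp only [Set.mem_setOf_eq, not_le] at hz
    by_cases hzA : z ∈ A'
    · exact Or.inl (subset_toMeasurable _ _ ⟨hzA, hz⟩)
    · exact Or.inr hzA
  refine measure_mono_null hincl ?_
  rw [Measure.restrict_apply' hA'meas]
  have hss : (toMeasurable μH[s] {x | x ∈ A' ∧ F A' x < ENNReal.ofReal cr} ∪ A'ᶜ) ∩ A' ⊆
      toMeasurable μH[s] {x | x ∈ A' ∧ F A' x < ENNReal.ofReal cr} := by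
    rintro z ⟨hz1 | hz1, hz2⟩
    · exact hz1
    · exact absurd hz2 hz1
  refine measure_mono_null hss ?_
  rw [measure_toMeasurable]
  exact hE0
end

section
/- Let V be a linear subspace of ℝⁿ with orthogonal complement V⊥, and let P denote the orthogonal projection of ℝⁿ onto V⊥. Let 0 < α ≤ 1, ε > 0, r > 0, and let y, z ∈ ℝⁿ with |P(z) − P(y)| < εr. Then every point w ∈ ℝⁿ satisfying |P(w) − P(y)| < εr, |w − z| ≤ 3r, and |w − z| ≥ 4εr/α belongs to X(z, 3r, V, α/2); that is, P⁻¹(B(P(y), εr)) ∩ B(z, 3r) \ B(z, 4εr/α) ⊆ X(z, 3r, V, α/2). -/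
open Metric

/-- The cone `X(x, r, V, α) = {y : dist(y - x, V) < α |y - x|} ∩ B(x, r)`. -/
def coneX {n : ℕ} (x : EuclideanSpace ℝ (Fin n)) (r : ℝ)
    (V : Submodule ℝ (EuclideanSpace ℝ (Fin n))) (α : ℝ) :
    Set (EuclideanSpace ℝ (Fin n)) :=
  {y | Metric.infDist (y - x) (V : Set (EuclideanSpace ℝ (Fin n))) < α * ‖y - x‖} ∩
    closedBall x r

/-- Let `P` be the orthogonal projection of `ℝⁿ` onto `V⊥`. If `|P z − P y| < ε r`, then
`P⁻¹(B(P y, ε r)) ∩ B(z, 3r) \ B(z, 4 ε r / α) ⊆ X(z, 3r, V, α/2)`. -/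
theorem slab_subset_coneX (n : ℕ) (V : Submodule ℝ (EuclideanSpace ℝ (Fin n)))
    (α ε r : ℝ) (hα0 : 0 < α) (hα1 : α ≤ 1) (hε : 0 < ε) (hr : 0 < r)
    (y z : EuclideanSpace ℝ (Fin n))
    (hz : ‖((Submodule.orthogonalProjectionOnto Vᗮ z : Vᗮ) : EuclideanSpace ℝ (Fin n)) -
        ((Submodule.orthogonalProjectionOnto Vᗮ y : Vᗮ) : EuclideanSpace ℝ (Fin n))‖ < ε * r) :
    ∀ w : EuclideanSpace ℝ (Fin n),
      ‖((Submodule.orthogonalProjectionOnto Vᗮ w : Vᗮ) : EuclideanSpace ℝ (Fin n)) -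
          ((Submodule.orthogonalProjectionOnto Vᗮ y : Vᗮ) : EuclideanSpace ℝ (Fin n))‖ < ε * r →
      w ∈ closedBall z (3 * r) →
      w ∉ ball z (4 * ε * r / α) →
      w ∈ coneX z (3 * r) V (α / 2) := by
  intro w hw hw3 hw4
  refine ⟨?_, hw3⟩
  -- norm of the orthogonal part of w - z
  have hproj : ((Submodule.orthogonalProjectionOnto Vᗮ (w - z) : Vᗮ) : EuclideanSpace ℝ (Fin n))
      = ((Submodule.orthogonalProjectionOnto Vᗮ w : Vᗮ) : EuclideanSpace ℝ (Fin n))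
        - ((Submodule.orthogonalProjectionOnto Vᗮ z : Vᗮ) : EuclideanSpace ℝ (Fin n)) := by
    rw [map_sub]; rfl
  have hP : ‖((Submodule.orthogonalProjectionOnto Vᗮ (w - z) : Vᗮ) : EuclideanSpace ℝ (Fin n))‖
      < 2 * (ε * r) := by
    rw [hproj]
    calc ‖((Submodule.orthogonalProjectionOnto Vᗮ w : Vᗮ) : EuclideanSpace ℝ (Fin n))
          - ((Submodule.orthogonalProjectionOnto Vᗮ z : Vᗮ) : EuclideanSpace ℝ (Fin n))‖
        ≤ ‖((Submodule.orthogonalProjectionOnto Vᗮ w : Vᗮ) : EuclideanSpace ℝ (Fin n))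
            - ((Submodule.orthogonalProjectionOnto Vᗮ y : Vᗮ) : EuclideanSpace ℝ (Fin n))‖
          + ‖((Submodule.orthogonalProjectionOnto Vᗮ y : Vᗮ) : EuclideanSpace ℝ (Fin n))
            - ((Submodule.orthogonalProjectionOnto Vᗮ z : Vᗮ) : EuclideanSpace ℝ (Fin n))‖ :=
          norm_sub_le_norm_sub_add_norm_sub _ _ _
      _ < ε * r + ε * r := by
          rw [norm_sub_rev] at hz; exact add_lt_add hw hz
      _ = 2 * (ε * r) := by ring
  have hmem : ((Submodule.orthogonalProjectionOnto V (w - z) : V) : EuclideanSpace ℝ (Fin n))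
      ∈ (V : Set (EuclideanSpace ℝ (Fin n))) := (Submodule.orthogonalProjectionOnto V (w - z)).2
  have hinf : Metric.infDist (w - z) (V : Set (EuclideanSpace ℝ (Fin n)))
      ≤ ‖((Submodule.orthogonalProjectionOnto Vᗮ (w - z) : Vᗮ) : EuclideanSpace ℝ (Fin n))‖ := by
    have := Metric.infDist_le_dist_of_mem (x := w - z) hmem
    have he : ((Submodule.orthogonalProjectionOnto Vᗮ (w - z) : Vᗮ) : EuclideanSpace ℝ (Fin n))
        = w - z - ((Submodule.orthogonalProjectionOnto V (w - z) : V) : EuclideanSpace ℝ (Fin n)) :=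
      congrArg Subtype.val (Submodule.orthogonalProjectionOnto_orthogonal (K := V) (w - z))
    rw [dist_eq_norm] at this
    rwa [he]
  have hdist : 4 * ε * r / α ≤ ‖w - z‖ := by
    have := (Metric.mem_ball.not.mp hw4)
    rw [dist_eq_norm] at this
    linarith [not_lt.mp this]
  have h2 : 2 * (ε * r) ≤ α / 2 * ‖w - z‖ := by
    have h := mul_le_mul_of_nonneg_left hdist (le_of_lt (by positivity : (0:ℝ) < α / 2))
    calc 2 * (ε * r) = α / 2 * (4 * ε * r / α) := by field_simp; ring
      _ ≤ α / 2 * ‖w - z‖ := h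
  exact lt_of_le_of_lt hinf (lt_of_lt_of_le hP h2)
end

section
/- Let x ∈ ℝⁿ, r > 0, and √2 − 1 < ϱ < 1/2, and set t = 1/√(1 − 2ϱ) and δ = (1 − ϱ − √(ϱ² + 2ϱ − 1))/√(1 − 2ϱ). If z ∈ ℝⁿ \ {x} satisfies B(z, ϱtr) ⊆ B(x, tr), then, writing θ = (z − x)/|z − x|, one has H(x + δrθ, θ) ∩ B(x, r) ⊆ B(z, ϱtr). -/
open Metric
open scoped RealInnerProductSpace

private lemma quad_aux (a d D R s : ℝ) (hd : 0 ≤ d) (hdD : d ≤ D) (hD : 0 < D)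
    (h0 : s ≤ R) (hDD : D ^ 2 - a * D + s ≤ R) : d ^ 2 - a * d + s ≤ R := by
  have key : (R - (d ^ 2 - a * d + s)) * D
      = (D - d) * (R - s) + d * (R - (D ^ 2 - a * D + s)) + d * D * (D - d) := by ring
  have h1 : 0 ≤ (R - (d ^ 2 - a * d + s)) * D := by
    rw [key]
    have t1 := mul_nonneg (sub_nonneg.2 hdD) (sub_nonneg.2 h0)
    have t2 := mul_nonneg hd (sub_nonneg.2 hDD)
    have t3 := mul_nonneg (mul_nonneg hd hD.le) (sub_nonneg.2 hdD)
    linarith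
  have := (mul_nonneg_iff_of_pos_right hD).mp h1
  linarith

/-- Let `√2 − 1 < ϱ < 1/2`, `t = 1/√(1 − 2ϱ)` and
`δ = (1 − ϱ − √(ϱ² + 2ϱ − 1))/√(1 − 2ϱ)`. If `z ≠ x` satisfies `B(z, ϱtr) ⊆ B(x, tr)`,
then, with `θ = (z − x)/|z − x|`, the half space `H(x + δrθ, θ)` intersected with `B(x, r)`
is contained in `B(z, ϱtr)`. -/
theorem halfspace_inter_ball_subset (n : ℕ) (x z : EuclideanSpace ℝ (Fin n))
    (r ϱ t δ : ℝ) (hr : 0 < r) (hϱ1 : Real.sqrt 2 - 1 < ϱ) (hϱ2 : ϱ < 1 / 2)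
    (ht : t = 1 / Real.sqrt (1 - 2 * ϱ))
    (hδ : δ = (1 - ϱ - Real.sqrt (ϱ ^ 2 + 2 * ϱ - 1)) / Real.sqrt (1 - 2 * ϱ))
    (hzx : z ≠ x)
    (hball : closedBall z (ϱ * t * r) ⊆ closedBall x (t * r)) :
    {y : EuclideanSpace ℝ (Fin n) |
        0 < ⟪y - (x + (δ * r) • (‖z - x‖⁻¹ • (z - x))), ‖z - x‖⁻¹ • (z - x)⟫} ∩
      closedBall x r ⊆ closedBall z (ϱ * t * r) := by
  -- basic constants
  have hsqrt2 : (1:ℝ) < Real.sqrt 2 := by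
    have : Real.sqrt 1 < Real.sqrt 2 := Real.sqrt_lt_sqrt (by norm_num) (by norm_num)
    simpa using this
  have hϱ0 : 0 < ϱ := by linarith
  set w := Real.sqrt (1 - 2 * ϱ) with hwdef
  set q := Real.sqrt (ϱ ^ 2 + 2 * ϱ - 1) with hqdef
  have h12 : (0:ℝ) < 1 - 2 * ϱ := by linarith
  have hw0 : 0 < w := Real.sqrt_pos.2 h12
  have hw2 : w ^ 2 = 1 - 2 * ϱ := Real.sq_sqrt h12.le
  have hq_arg : (0:ℝ) ≤ ϱ ^ 2 + 2 * ϱ - 1 := by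
    nlinarith [Real.sq_sqrt (show (0:ℝ) ≤ 2 by norm_num), Real.sqrt_nonneg 2]
  have hq0 : 0 ≤ q := Real.sqrt_nonneg _
  have hq2 : q ^ 2 = ϱ ^ 2 + 2 * ϱ - 1 := Real.sq_sqrt hq_arg
  have ht0 : 0 < t := by rw [ht]; positivity
  have htw : t * w = 1 := by
    rw [ht]; field_simp
  have hδw : δ * w = 1 - ϱ - q := by
    rw [hδ]; field_simp
  -- radius nonneg
  have hρtr : 0 < ϱ * t * r := by positivity
  intro y hy
  obtain ⟨hy1, hy2⟩ := hy
  rw [mem_closedBall, dist_eq_norm] at hy2 ⊢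
  set v := z - x with hv
  have hvne : v ≠ 0 := sub_ne_zero.2 hzx
  have hd : 0 < ‖v‖ := norm_pos_iff.2 hvne
  -- From the ball inclusion: ‖v‖ + ϱ t r ≤ t r
  have hdle : ‖v‖ + ϱ * t * r ≤ t * r := by
    have hmem : z + (ϱ * t * r / ‖v‖) • v ∈ closedBall z (ϱ * t * r) := by
      rw [mem_closedBall, dist_eq_norm, add_sub_cancel_left, norm_smul]
      rw [norm_div, Real.norm_eq_abs, abs_of_pos hρtr, Real.norm_eq_abs,
        abs_of_pos hd, div_mul_cancel₀]
      exact hd.ne'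
    have := hball hmem
    rw [mem_closedBall, dist_eq_norm] at this
    have heq : z + (ϱ * t * r / ‖v‖) • v - x = (1 + ϱ * t * r / ‖v‖) • v := by
      rw [add_smul, one_smul, hv]; abel
    rw [heq, norm_smul, Real.norm_eq_abs, abs_of_pos (by positivity)] at this
    have h' : (1 + ϱ * t * r / ‖v‖) * ‖v‖ = ‖v‖ + ϱ * t * r := by
      field_simp
    rw [h'] at this
    exact this
  -- inner product lower bound
  have hs : δ * r * ‖v‖ < ⟪y - x, v⟫ := by
    have heq : y - (x + (δ * r) • (‖v‖⁻¹ • v)) = (y - x) - (δ * r * ‖v‖⁻¹) • v := by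
      rw [smul_smul]; abel_nf
    rw [Set.mem_setOf_eq, heq] at hy1
    rw [real_inner_smul_right, inner_sub_left, real_inner_smul_left,
      real_inner_self_eq_norm_sq] at hy1
    have hy1' := mul_pos hd hy1
    have e : ‖v‖ * (‖v‖⁻¹ * (⟪y - x, v⟫ - δ * r * ‖v‖⁻¹ * ‖v‖ ^ 2))
        = ⟪y - x, v⟫ - δ * r * ‖v‖ := by
      field_simp
    rw [e] at hy1'
    linarith
  -- squared norm expansion
  have hexp : ‖y - z‖ ^ 2 = ‖y - x‖ ^ 2 - 2 * ⟪y - x, v⟫ + ‖v‖ ^ 2 := by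
    have heq : y - z = (y - x) - v := by rw [hv]; abel
    rw [heq, norm_sub_sq_real]
  -- endpoint quadratic facts
  have hD : ‖v‖ ≤ (1 - ϱ) * t * r := by
    have : t * r = (1 - ϱ) * t * r + ϱ * t * r := by ring
    linarith
  have hf0 : r ^ 2 ≤ ϱ ^ 2 * t ^ 2 * r ^ 2 := by
    have h1 : w ^ 2 ≤ ϱ ^ 2 := by linarith [hw2, hq_arg]
    have et : t ^ 2 * w ^ 2 = 1 := by linear_combination (t * w + 1) * htw
    have h2 : 1 ≤ ϱ ^ 2 * t ^ 2 := by
      have h3 := mul_le_mul_of_nonneg_left h1 (sq_nonneg t)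
      calc (1:ℝ) = t ^ 2 * w ^ 2 := et.symm
        _ ≤ t ^ 2 * ϱ ^ 2 := h3
        _ = ϱ ^ 2 * t ^ 2 := by ring
    calc r ^ 2 = 1 * r ^ 2 := (one_mul _).symm
      _ ≤ (ϱ ^ 2 * t ^ 2) * r ^ 2 := mul_le_mul_of_nonneg_right h2 (sq_nonneg r)
      _ = ϱ ^ 2 * t ^ 2 * r ^ 2 := by ring
  have hfD : ((1 - ϱ) * t * r) ^ 2 - 2 * (δ * r) * ((1 - ϱ) * t * r) + r ^ 2
      ≤ ϱ ^ 2 * t ^ 2 * r ^ 2 := by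
    -- multiply through by w^2 = 1 - 2ϱ using t*w = 1, δ*w = 1 - ϱ - q
    have key : (1 - ϱ) ^ 2 - 2 * (1 - ϱ - q) * (1 - ϱ) + (1 - 2 * ϱ) ≤ ϱ ^ 2 := by
      nlinarith [sq_nonneg (1 - ϱ - q)]
    have hw2' : 0 < w ^ 2 := by positivity
    have e1 : ((1 - ϱ) * t * r) ^ 2 * w ^ 2 = (1 - ϱ) ^ 2 * r ^ 2 := by
      linear_combination ((1 - ϱ) ^ 2 * r ^ 2 * (t * w + 1)) * htw
    have e2 : (2 * (δ * r) * ((1 - ϱ) * t * r)) * w ^ 2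
        = 2 * (1 - ϱ - q) * (1 - ϱ) * r ^ 2 := by
      linear_combination (2 * (1 - ϱ) * r ^ 2 * δ * w) * htw + (2 * (1 - ϱ) * r ^ 2) * hδw
    have e3 : (ϱ ^ 2 * t ^ 2 * r ^ 2) * w ^ 2 = ϱ ^ 2 * r ^ 2 := by
      linear_combination (ϱ ^ 2 * r ^ 2 * (t * w + 1)) * htw
    have e4 : r ^ 2 * w ^ 2 = r ^ 2 * (1 - 2 * ϱ) := by rw [hw2]
    have keyr := mul_le_mul_of_nonneg_right key (sq_nonneg r)
    have hAB : (((1 - ϱ) * t * r) ^ 2 - 2 * (δ * r) * ((1 - ϱ) * t * r) + r ^ 2) * w ^ 2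
        ≤ (ϱ ^ 2 * t ^ 2 * r ^ 2) * w ^ 2 := by
      have l1 : (((1 - ϱ) * t * r) ^ 2 - 2 * (δ * r) * ((1 - ϱ) * t * r) + r ^ 2) * w ^ 2
          = (1 - ϱ) ^ 2 * r ^ 2 - 2 * (1 - ϱ - q) * (1 - ϱ) * r ^ 2 + r ^ 2 * (1 - 2 * ϱ) := by
        linear_combination e1 - e2 + e4
      rw [l1, e3]
      linarith [keyr]
    exact le_of_mul_le_mul_right hAB hw2'
  -- combine: quadratic in d := ‖v‖ on [0, (1-ϱ)tr]
  have hquad : ‖v‖ ^ 2 - 2 * (δ * r) * ‖v‖ + r ^ 2 ≤ ϱ ^ 2 * t ^ 2 * r ^ 2 :=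
    quad_aux (2 * (δ * r)) ‖v‖ ((1 - ϱ) * t * r) _ _ (norm_nonneg v) hD
      (mul_pos (mul_pos (by linarith : (0:ℝ) < 1 - ϱ) ht0) hr) hf0 hfD
  have hA2 : ‖y - x‖ ^ 2 ≤ r ^ 2 := by
    have := pow_le_pow_left₀ (norm_nonneg (y - x)) hy2 2
    simpa using this
  have hsq : ‖y - z‖ ^ 2 ≤ (ϱ * t * r) ^ 2 := by
    have hd' : δ * r * ‖v‖ ≤ ⟪y - x, v⟫ := hs.le
    have : (ϱ * t * r) ^ 2 = ϱ ^ 2 * t ^ 2 * r ^ 2 := by ring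
    rw [this]
    linarith [hexp, hA2, hd', hquad]
  calc ‖y - z‖ = Real.sqrt (‖y - z‖ ^ 2) := by rw [Real.sqrt_sq (norm_nonneg _)]
    _ ≤ Real.sqrt ((ϱ * t * r) ^ 2) := Real.sqrt_le_sqrt hsq
    _ = ϱ * t * r := Real.sqrt_sq hρtr.le
end

section
/- Let n ≥ 1 and l ≥ 1 be integers and let s > 0 be a real number satisfying (2ⁿ − 1) · Σ_{i=1}^{l} 2^{−is} = 1. Then s ≤ n − (2/(5 log 2)) · 2^{−ln}. -/
/-- If `s > 0` satisfies the similarity dimension equation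
`(2ⁿ − 1) · Σ_{i=1}^{l} 2^{−is} = 1` for integers `n, l ≥ 1`, then
`s ≤ n − (2/(5 log 2)) · 2^{−ln}`. -/
theorem similarity_dim_bound (n l : ℕ) (hn : 1 ≤ n) (hl : 1 ≤ l) (s : ℝ) (hs : 0 < s)
    (heq : ((2 : ℝ) ^ n - 1) * ∑ i ∈ Finset.Icc 1 l, (2 : ℝ) ^ (-(i : ℝ) * s) = 1) :
    s ≤ (n : ℝ) - 2 / (5 * Real.log 2) * (2 : ℝ) ^ (-((l : ℝ) * (n : ℝ))) := by
  have h2 : (0:ℝ) < 2 := two_pos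
  set t : ℝ := (2:ℝ) ^ (-((l : ℝ) * (n : ℝ))) with htdef
  set r : ℝ := (2:ℝ) ^ (-s) with hrdef
  have hr0 : 0 < r := Real.rpow_pos_of_pos two_pos _
  have hr1 : r < 1 := Real.rpow_lt_one_of_one_lt_of_neg one_lt_two (by linarith)
  have hrne : r ≠ 1 := ne_of_lt hr1
  have hrne' : r - 1 ≠ 0 := sub_ne_zero.mpr hrne
  -- rewrite the sum as a geometric sum
  have hsum : ∑ i ∈ Finset.Icc 1 l, (2:ℝ) ^ (-(i:ℝ) * s) = (r ^ (l+1) - r ^ 1) / (r - 1) := by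
    rw [show Finset.Icc 1 l = Finset.Ico 1 (l+1) by rw [Finset.Ico_add_one_right_eq_Icc]]
    rw [← geom_sum_Ico hrne (by omega)]
    apply Finset.sum_congr rfl
    intro i _
    rw [hrdef, ← Real.rpow_natCast ((2:ℝ)^(-s)) i, ← Real.rpow_mul (by norm_num)]
    ring_nf
  have h2n : (2:ℝ) ≤ 2 ^ n := by
    calc (2:ℝ) = 2 ^ 1 := (pow_one 2).symm
    _ ≤ 2 ^ n := pow_le_pow_right₀ (by norm_num) hn
  -- the key identity
  have key : ((2:ℝ)^n - 1) * r^(l+1) = 2^n * r - 1 := by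
    rw [hsum, pow_one, mul_div_assoc', div_eq_iff hrne'] at heq
    nlinarith [heq]
  have hrl : 0 < r ^ (l+1) := pow_pos hr0 _
  have hd : 0 < (2:ℝ)^n * r - 1 := by
    rw [← key]
    nlinarith [mul_pos (show (0:ℝ) < 2^n - 1 by linarith) hrl]
  -- s < n
  have hsn : s < (n:ℝ) := by
    have hrn : (2:ℝ) ^ (-(n:ℝ)) < r := by
      have h1 : (2:ℝ) ^ ((n:ℝ)) * (2:ℝ) ^ (-(n:ℝ)) = 1 := by
        rw [← Real.rpow_add two_pos]; norm_num
      have h2' : (2:ℝ) ^ ((n:ℝ)) = 2 ^ n := Real.rpow_natCast 2 n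
      have hp : (0:ℝ) < (2:ℝ) ^ ((n:ℝ)) := Real.rpow_pos_of_pos two_pos _
      nlinarith [hd]
    have := (Real.rpow_lt_rpow_left_iff (x := (2:ℝ)) one_lt_two).mp hrn
    linarith
  -- lower bound δ ≥ t/2
  have hδt : t/2 ≤ (2:ℝ)^n * r - 1 := by
    rw [← key]
    have h1 : (2:ℝ)^(-(n:ℝ)*((l:ℝ)+1)) ≤ r^(l+1) := by
      rw [hrdef, ← Real.rpow_natCast ((2:ℝ)^(-s)) (l+1), ← Real.rpow_mul (by norm_num)]
      apply Real.rpow_le_rpow_of_exponent_le one_le_two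
      have hl1 : (0:ℝ) < ((l+1 : ℕ) : ℝ) := by positivity
      have : -(n:ℝ) ≤ -s := by linarith
      push_cast
      nlinarith
    have h3 : (2:ℝ)^n * (2:ℝ)^(-(n:ℝ)*((l:ℝ)+1)) = t := by
      rw [htdef, ← Real.rpow_natCast 2 n, ← Real.rpow_add two_pos]
      congr 1; ring
    have hpe : (0:ℝ) < (2:ℝ)^(-(n:ℝ)*((l:ℝ)+1)) := Real.rpow_pos_of_pos two_pos _
    nlinarith [h1, h3, hpe, h2n]
  have hlog2 : 0 < Real.log 2 := Real.log_pos one_lt_two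
  have ht0 : 0 < t := Real.rpow_pos_of_pos two_pos _
  have thalf : t ≤ 1/2 := by
    have hln : (1:ℝ) ≤ (l:ℝ) * (n:ℝ) := by
      have : (1:ℝ) ≤ (l:ℝ) := by exact_mod_cast hl
      have : (1:ℝ) ≤ (n:ℝ) := by exact_mod_cast hn
      nlinarith [show (1:ℝ) ≤ (l:ℝ) by exact_mod_cast hl]
    calc t ≤ (2:ℝ) ^ (-1 : ℝ) :=
          Real.rpow_le_rpow_of_exponent_le one_le_two (by linarith)
    _ = 1/2 := by rw [Real.rpow_neg_one]; norm_num
  have hu : (0:ℝ) < 1 + t/2 := by linarith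
  -- (n - s) * log 2 = log (2^n * r)
  have hA : ((n:ℝ) - s) * Real.log 2 = Real.log ((2:ℝ)^n * r) := by
    rw [hrdef, ← Real.rpow_natCast 2 n, ← Real.rpow_add two_pos, Real.log_rpow two_pos]
    ring
  have hB : Real.log (1 + t/2) ≤ Real.log ((2:ℝ)^n * r) := by
    apply Real.log_le_log hu
    linarith
  have hC : 2/5 * t ≤ Real.log (1 + t/2) := by
    have hinv := Real.log_le_sub_one_of_pos (show (0:ℝ) < (1+t/2)⁻¹ by positivity)
    rw [Real.log_inv] at hinv
    have hmul : (1 + t/2) * (1 + t/2)⁻¹ = 1 := mul_inv_cancel₀ (ne_of_gt hu)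
    nlinarith [hinv, hmul, sq_nonneg t]
  have hmain : 2/5 * t ≤ ((n:ℝ) - s) * Real.log 2 := by
    rw [hA]; linarith
  have hfin : 2 / (5 * Real.log 2) * t = (2/5 * t) / Real.log 2 := by
    field_simp
  have hdiv : 2/5 * t / Real.log 2 ≤ (n:ℝ) - s := (div_le_iff₀ hlog2).mpr hmain
  rw [hfin]
  linarith
end
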